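/- arXiv:1701.04855 — 6 statements merged into one kernel-verified Lean document; each statement's English description precedes it below -/
import Mathlib

section
/- Dobinski's formula: B_n = (1/e) ∑_{k=0}^∞ k^n / k! for all n ≥ 0. -/
open scoped BigOperators

noncomputable def bell (n : ℕ) : ℕ := Nat.card (Finpartition (Finset.univ : Finset (Fin n)))

open Finset

section maps
variable {α β : Type*} [DecidableEq α] [DecidableEq β]

/-- Transfer a finpartition along an embedding. -/
def fpMap {s : Finset α} (f : α ↪ β) (P : Finpartition s) : Finpartition (s.map f) where
  parts := P.parts.map (Finset.mapEmbedding f).toEmbedding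
  supIndep := by
    rw [Finset.supIndep_iff_pairwiseDisjoint]
    intro u hu v hv huv
    simp only [coe_map, Set.mem_image, mem_coe, RelEmbedding.coe_toEmbedding,
      Finset.mapEmbedding_apply] at hu hv
    obtain ⟨p, hp, rfl⟩ := hu
    obtain ⟨q, hq, rfl⟩ := hv
    rw [Function.onFun, id, id, Finset.disjoint_map]
    exact P.disjoint hp hq (fun h => huv (by rw [h]))
  sup_parts := by
    ext b
    simp only [Finset.mem_sup, mem_map, RelEmbedding.coe_toEmbedding,
      Finset.mapEmbedding_apply, id]
    constructor
    · rintro ⟨_, ⟨p, hp, rfl⟩, hb⟩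
      rw [Finset.mem_map] at hb
      obtain ⟨a, ha, rfl⟩ := hb
      exact ⟨a, P.le hp ha, rfl⟩
    · rintro ⟨a, ha, rfl⟩
      obtain ⟨p, hp, hap⟩ := P.exists_mem ha
      exact ⟨p.map f, ⟨p, hp, rfl⟩, mem_map_of_mem f hap⟩
  bot_notMem := by
    simp only [bot_eq_empty, mem_map, RelEmbedding.coe_toEmbedding, Finset.mapEmbedding_apply]
    rintro ⟨p, hp, h⟩
    rw [Finset.map_eq_empty] at h
    have : (⊥ : Finset α) ∈ P.parts := by rw [bot_eq_empty, ← h]; exact hp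
    exact P.bot_notMem this

@[simp] lemma fpMap_parts {s : Finset α} (f : α ↪ β) (P : Finpartition s) :
    (fpMap f P).parts = P.parts.map (Finset.mapEmbedding f).toEmbedding := rfl

/-- Finpartitions of `s` are equivalent to finpartitions of the subtype's universe. -/
def fpSubtypeEquiv (s : Finset α) :
    Finpartition s ≃ Finpartition (Finset.univ : Finset {x // x ∈ s}) where
  toFun P :=
    { parts := P.parts.image (Finset.subtype (· ∈ s))
      supIndep := by
        rw [Finset.supIndep_iff_pairwiseDisjoint]
        intro u hu v hv huv
        simp only [coe_image, Set.mem_image, mem_coe] at hu hv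
        obtain ⟨p, hp, rfl⟩ := hu
        obtain ⟨q, hq, rfl⟩ := hv
        have hpq : p ≠ q := fun h => huv (by rw [h])
        have hd : Disjoint p q := P.disjoint hp hq hpq
        rw [Function.onFun, id, id, Finset.disjoint_left]
        intro x hx hx'
        rw [Finset.mem_subtype] at hx hx'
        exact Finset.disjoint_left.mp hd hx hx'
      sup_parts := by
        ext x
        simp only [Finset.mem_sup, mem_image, mem_univ, iff_true, id]
        obtain ⟨p, hp, hxp⟩ := P.exists_mem x.2
        exact ⟨p.subtype (· ∈ s), ⟨p, hp, rfl⟩, Finset.mem_subtype.mpr hxp⟩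
      bot_notMem := by
        simp only [bot_eq_empty, mem_image]
        rintro ⟨p, hp, h⟩
        obtain ⟨x, hx⟩ := P.nonempty_of_mem_parts hp
        have : (⟨x, P.le hp hx⟩ : {x // x ∈ s}) ∈ p.subtype (· ∈ s) :=
          Finset.mem_subtype.mpr hx
        rw [h] at this
        exact absurd this (notMem_empty _) }
  invFun Q := (fpMap (Function.Embedding.subtype (· ∈ s)) Q).copy
    (by rw [Finset.univ_eq_attach, Finset.attach_map_val])
  left_inv P := by
    apply Finpartition.ext
    simp only [Finpartition.copy_parts, fpMap_parts, Finset.map_eq_image, Finset.image_image]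
    have : ∀ p ∈ P.parts,
        ((Finset.mapEmbedding (Function.Embedding.subtype (· ∈ s))).toEmbedding
          ∘ Finset.subtype (· ∈ s)) p = id p := by
      intro p hp
      simp only [Function.comp_apply, RelEmbedding.coe_toEmbedding,
        Finset.mapEmbedding_apply, Finset.subtype_map, id]
      exact Finset.filter_true_of_mem (fun x hx => P.le hp hx)
    rw [Finset.image_congr this, Finset.image_id]
  right_inv Q := by
    apply Finpartition.ext
    simp only [Finpartition.copy_parts, fpMap_parts, Finset.map_eq_image, Finset.image_image]
    have : ∀ q ∈ Q.parts,
        (Finset.subtype (· ∈ s)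
          ∘ (Finset.mapEmbedding (Function.Embedding.subtype (· ∈ s))).toEmbedding) q = id q := by
      intro q hq
      ext x
      simp only [Function.comp_apply, RelEmbedding.coe_toEmbedding,
        Finset.mapEmbedding_apply, Finset.mem_subtype, Finset.mem_map,
        Function.Embedding.coe_subtype, id]
      constructor
      · rintro ⟨y, hy, h⟩
        rwa [show y = x from Subtype.ext h] at hy
      · intro hx
        exact ⟨x, hx, rfl⟩
    rw [Finset.image_congr this, Finset.image_id]

/-- Transfer finpartitions of universes along a type equivalence. -/
def fpCongr (e : α ≃ β) [Fintype α] [Fintype β] :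
    Finpartition (Finset.univ : Finset α) ≃ Finpartition (Finset.univ : Finset β) where
  toFun P := (fpMap e.toEmbedding P).copy (Finset.map_univ_equiv e)
  invFun Q := (fpMap e.symm.toEmbedding Q).copy (Finset.map_univ_equiv e.symm)
  left_inv P := by
    apply Finpartition.ext
    simp only [Finpartition.copy_parts, fpMap_parts, Finset.map_eq_image, Finset.image_image]
    have : ∀ p ∈ P.parts,
        ((Finset.mapEmbedding e.symm.toEmbedding).toEmbedding
          ∘ (Finset.mapEmbedding e.toEmbedding).toEmbedding) p = id p := by
      intro p hp
      simp only [Function.comp_apply, RelEmbedding.coe_toEmbedding, Finset.mapEmbedding_apply, id]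
      ext a
      simp [Finset.mem_map]
    rw [Finset.image_congr this, Finset.image_id]
  right_inv Q := by
    apply Finpartition.ext
    simp only [Finpartition.copy_parts, fpMap_parts, Finset.map_eq_image, Finset.image_image]
    have : ∀ q ∈ Q.parts,
        ((Finset.mapEmbedding e.toEmbedding).toEmbedding
          ∘ (Finset.mapEmbedding e.symm.toEmbedding).toEmbedding) q = id q := by
      intro q hq
      simp only [Function.comp_apply, RelEmbedding.coe_toEmbedding, Finset.mapEmbedding_apply, id]
      ext a
      simp [Finset.mem_map]
    rw [Finset.image_congr this, Finset.image_id]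

lemma card_finpartition (s : Finset α) : Nat.card (Finpartition s) = bell s.card := by
  exact Nat.card_congr ((fpSubtypeEquiv s).trans (fpCongr s.equivFin))

end maps

section fiber
variable {α : Type*} [DecidableEq α]

lemma avoid_parts_of_mem {s : Finset α} (P : Finpartition s) {t : Finset α} (ht : t ∈ P.parts) :
    (P.avoid t).parts = P.parts.erase t := by
  ext c
  simp only [Finpartition.mem_avoid, mem_erase]
  constructor
  · rintro ⟨d, hd, hdt, rfl⟩
    have hne : d ≠ t := fun h => hdt (h ▸ le_refl _)
    have hdis : Disjoint d t := P.disjoint hd ht hne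
    rw [Finset.sdiff_eq_self_iff_disjoint.mpr hdis]
    exact ⟨hne, hd⟩
  · rintro ⟨hne, hc⟩
    have hdis : Disjoint c t := P.disjoint hc ht hne
    refine ⟨c, hc, fun hle => ?_, Finset.sdiff_eq_self_iff_disjoint.mpr hdis⟩
    exact (P.nonempty_of_mem_parts hc).ne_empty (hdis.eq_bot_of_le hle)

variable [Fintype α]

def fiberEquiv (a : α) (t : Finset α) (hat : a ∈ t) :
    {P : Finpartition (Finset.univ : Finset α) // P.part a = t} ≃ Finpartition tᶜ where
  toFun P := (P.1.avoid t).copy (by rw [Finset.compl_eq_univ_sdiff])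
  invFun Q := ⟨Q.extend (b := t)
      (by rw [Finset.bot_eq_empty]; exact (Finset.nonempty_iff_ne_empty).mp ⟨a, hat⟩)
      disjoint_compl_left
      (by rw [Finset.sup_eq_union, Finset.union_comm, Finset.union_compl]),
    Finpartition.part_eq_of_mem _ (by rw [Finpartition.extend_parts]; exact mem_insert_self _ _) hat⟩
  left_inv := by
    rintro ⟨P, rfl⟩
    apply Subtype.ext
    apply Finpartition.ext
    have hmem : P.part a ∈ P.parts := P.part_mem.mpr (mem_univ a)
    rw [Finpartition.extend_parts, Finpartition.copy_parts,
      avoid_parts_of_mem _ hmem, insert_erase hmem]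
  right_inv Q := by
    apply Finpartition.ext
    rw [Finpartition.copy_parts, avoid_parts_of_mem _
      (by rw [Finpartition.extend_parts]; exact mem_insert_self _ _),
      Finpartition.extend_parts, erase_insert]
    intro ht
    have := Q.le ht hat
    rw [Finset.mem_compl] at this
    exact this hat

end fiber

lemma bell_zero : bell 0 = 1 := by
  rw [bell, show (Finset.univ : Finset (Fin 0)) = ⊥ from Finset.univ_eq_empty]
  exact Nat.card_unique

lemma bell_succ (n : ℕ) : bell (n + 1) = ∑ i ∈ Finset.range (n + 1), n.choose i * bell i := by
  classical
  set a : Fin (n + 1) := 0 with ha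
  have h0 : bell (n + 1) = Fintype.card (Finpartition (Finset.univ : Finset (Fin (n + 1)))) := by
    rw [bell, Nat.card_eq_fintype_card]
  rw [h0, ← Finset.card_univ,
    Finset.card_eq_sum_card_fiberwise (f := fun P => P.part a)
      (t := Finset.univ.filter (fun t : Finset (Fin (n + 1)) => a ∈ t))
      (fun P _ => mem_filter.mpr ⟨mem_univ _, P.mem_part (mem_univ a)⟩)]
  have hfib : ∀ t ∈ Finset.univ.filter (fun t : Finset (Fin (n + 1)) => a ∈ t),
      (Finset.univ.filter
        (fun P : Finpartition (Finset.univ : Finset (Fin (n + 1))) => P.part a = t)).card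
        = bell (n + 1 - t.card) := by
    intro t ht
    have hat : a ∈ t := (mem_filter.mp ht).2
    rw [← Fintype.card_subtype, ← Nat.card_eq_fintype_card, Nat.card_congr (fiberEquiv a t hat),
      card_finpartition, Finset.card_compl, Fintype.card_fin]
  rw [Finset.sum_congr rfl hfib]
  -- reindex over subsets of univ.erase a
  have hre : ∑ t ∈ Finset.univ.filter (fun t : Finset (Fin (n + 1)) => a ∈ t),
      bell (n + 1 - t.card)
      = ∑ s ∈ (Finset.univ.erase a).powerset, bell (n - s.card) := by
    apply Finset.sum_nbij' (fun t => t.erase a) (fun s => insert a s)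
    · intro t ht
      exact mem_powerset.mpr (Finset.erase_subset_erase a (Finset.subset_univ t))
    · intro s hs
      exact mem_filter.mpr ⟨mem_univ _, mem_insert_self a s⟩
    · intro t ht
      exact Finset.insert_erase (mem_filter.mp ht).2
    · intro s hs
      exact Finset.erase_insert
        (fun has => (Finset.notMem_erase a Finset.univ) (Finset.mem_powerset.mp hs has))
    · intro t ht
      have hat : a ∈ t := (mem_filter.mp ht).2
      congr 1
      rw [Finset.card_erase_of_mem hat]
      have : 1 ≤ t.card := Finset.card_pos.mpr ⟨a, hat⟩
      omega
  rw [hre, Finset.sum_powerset]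
  have hcard : (Finset.univ.erase a).card = n := by
    rw [Finset.card_erase_of_mem (mem_univ a), Finset.card_univ, Fintype.card_fin]
    omega
  rw [hcard]
  have hinner : ∀ j ∈ Finset.range (n + 1),
      ∑ s ∈ Finset.powersetCard j (Finset.univ.erase a), bell (n - s.card)
        = n.choose j * bell (n - j) := by
    intro j hj
    rw [Finset.sum_congr rfl (fun s hs => by
      rw [(Finset.mem_powersetCard.mp hs).2]), Finset.sum_const, smul_eq_mul,
      Finset.card_powersetCard, hcard]
  rw [Finset.sum_congr rfl hinner, ← Finset.sum_range_reflect]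
  apply Finset.sum_congr rfl
  intro j hj
  have hjn : j ≤ n := by have := Finset.mem_range.mp hj; omega
  have h1 : n + 1 - 1 - j = n - j := by omega
  rw [h1, Nat.choose_symm hjn, Nat.sub_sub_self hjn]


open Filter Finset

section ana
open Filter

noncomputable def S (n : ℕ) : ℝ := ∑' k : ℕ, (k : ℝ) ^ n / k.factorial

lemma summS (n : ℕ) : Summable (fun k : ℕ => (k : ℝ) ^ n / k.factorial) := by
  apply summable_of_ratio_test_tendsto_lt_one (l := 0) one_pos
  · filter_upwards [eventually_ge_atTop 1] with k hk
    positivity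
  · have h1 : Tendsto (fun k : ℕ => ((1 : ℝ) + 1 / k) ^ n * ((k : ℝ) + 1)⁻¹) atTop (nhds 0) := by
      have ha : Tendsto (fun k : ℕ => ((1 : ℝ) + 1 / k) ^ n) atTop (nhds 1) := by
        have := ((tendsto_const_nhds (x := (1:ℝ)) (f := atTop (α := ℕ))).add
          (tendsto_one_div_atTop_nhds_zero_nat)).pow n
        simpa using this
      have hb : Tendsto (fun k : ℕ => ((k : ℝ) + 1)⁻¹) atTop (nhds 0) := by
        apply Tendsto.inv_tendsto_atTop
        exact tendsto_atTop_add_const_right _ _ tendsto_natCast_atTop_atTop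
      simpa using ha.mul hb
    apply h1.congr'
    filter_upwards [eventually_ge_atTop 1] with k hk
    have hk0 : (k : ℝ) ≠ 0 := Nat.cast_ne_zero.mpr (by omega)
    have hkf : (k.factorial : ℝ) ≠ 0 := Nat.cast_ne_zero.mpr k.factorial_ne_zero
    rw [Real.norm_eq_abs, Real.norm_eq_abs, abs_of_nonneg (by positivity),
      abs_of_nonneg (by positivity), Nat.factorial_succ]
    push_cast
    field_simp
    rw [← mul_pow, div_mul_cancel₀ _ hk0]

lemma S_zero : S 0 = Real.exp 1 := by
  rw [S, Real.exp_eq_exp_ℝ, NormedSpace.exp_eq_tsum_div]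
  simp

lemma S_succ (n : ℕ) : S (n + 1) = ∑ i ∈ range (n + 1), (n.choose i : ℝ) * S i := by
  have h1 : S (n + 1) = ∑' k : ℕ, ((k : ℝ) + 1) ^ n / k.factorial := by
    rw [S, Summable.tsum_eq_zero_add (summS (n + 1))]
    simp only [Nat.cast_zero, zero_pow (Nat.succ_ne_zero n), zero_div, zero_add]
    congr 1
    ext k
    have hkf : ((k + 1).factorial : ℝ) ≠ 0 := Nat.cast_ne_zero.mpr (k+1).factorial_ne_zero
    rw [Nat.factorial_succ]
    push_cast
    rw [pow_succ]
    have : ((k:ℝ) + 1) ≠ 0 := by positivity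
    field_simp
  rw [h1]
  have h2 : ∀ k : ℕ, ((k : ℝ) + 1) ^ n / k.factorial
      = ∑ i ∈ range (n + 1), (n.choose i : ℝ) * ((k : ℝ) ^ i / k.factorial) := by
    intro k
    rw [add_pow]
    rw [Finset.sum_div]
    apply Finset.sum_congr rfl
    intro i _
    ring
  rw [tsum_congr h2, Summable.tsum_finsetSum (fun i _ => (summS i).mul_left _)]
  apply Finset.sum_congr rfl
  intro i _
  rw [tsum_mul_left]
  rfl

end ana

lemma bell_mul_exp (n : ℕ) : (bell n : ℝ) * Real.exp 1 = S n := by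
  induction n using Nat.strong_induction_on with
  | _ n ih =>
    match n with
    | 0 => simp [bell_zero, S_zero]
    | Nat.succ n =>
      rw [bell_succ, S_succ]
      push_cast
      rw [Finset.sum_mul]
      apply Finset.sum_congr rfl
      intro i hi
      rw [mul_assoc, ih i (Nat.lt_succ_of_le (Nat.le_of_lt_succ (Finset.mem_range.mp hi)))]

/-- Dobinski's formula. -/
theorem dobinski (n : ℕ) :
    (bell n : ℝ) = (1 / Real.exp 1) * ∑' k : ℕ, (k : ℝ) ^ n / k.factorial := by
  rw [show ∑' k : ℕ, (k : ℝ) ^ n / k.factorial = S n from rfl, ← bell_mul_exp n]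
  have he := Real.exp_ne_zero 1
  field_simp
end

section
/- The n-th moment of a Poisson random variable with parameter 1 equals the n-th Bell number: ∑_{k=0}^∞ e^{-1} k^n / k! = B_n. -/
open scoped BigOperators

open Finset

namespace DobinskiAux

variable {α β : Type*} [Fintype α] [DecidableEq α] [Fintype β] [DecidableEq β]

def IsKer (f : α → Finset α) : Prop :=
  (∀ a, a ∈ f a) ∧ ∀ a b, b ∈ f a → f a = f b

abbrev Ker (α : Type*) [Fintype α] [DecidableEq α] := {f : α → Finset α // IsKer f}

def toKer (P : Finpartition (univ : Finset α)) : Ker α :=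
  ⟨fun a => P.part a, fun a => P.mem_part (mem_univ a), fun a b hb =>
    ((P.mem_part_iff_part_eq_part (mem_univ b) (mem_univ a)).mp hb).symm⟩

def ofKer (f : Ker α) : Finpartition (univ : Finset α) where
  parts := univ.image f.1
  supIndep := by
    rw [Finset.supIndep_iff_pairwiseDisjoint]
    rintro x hx y hy hxy
    simp only [coe_image, Set.mem_image] at hx hy
    obtain ⟨a, -, rfl⟩ := hx
    obtain ⟨b, -, rfl⟩ := hy
    simp only [Function.onFun, id]
    rw [Finset.disjoint_left]
    intro c hca hcb
    exact hxy ((f.2.2 a c hca).trans (f.2.2 b c hcb).symm)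
  sup_parts := by
    ext a
    simp only [Finset.mem_sup, mem_image, mem_univ, true_iff, id]
    exact ⟨fun _ => trivial, fun _ => ⟨f.1 a, ⟨a, trivial, rfl⟩, f.2.1 a⟩⟩
  bot_notMem := by
    simp only [Finset.bot_eq_empty, mem_image, mem_univ, true_and]
    rintro ⟨a, ha⟩
    exact absurd (f.2.1 a) (by rw [ha]; exact notMem_empty a)

def kerEquiv : Finpartition (univ : Finset α) ≃ Ker α where
  toFun := toKer
  invFun := ofKer
  left_inv P := by
    ext t
    simp only [ofKer, toKer, mem_image, mem_univ, true_and]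
    constructor
    · rintro ⟨a, rfl⟩; exact P.part_mem.2 (mem_univ a)
    · intro ht
      obtain ⟨a, ha⟩ := P.nonempty_of_mem_parts ht
      exact ⟨a, P.part_eq_of_mem ht ha⟩
  right_inv f := by
    apply Subtype.ext
    funext a
    exact Finpartition.part_eq_of_mem _ (mem_image_of_mem _ (mem_univ a)) (f.2.1 a)

def kerCongr (e : α ≃ β) : Ker α ≃ Ker β where
  toFun f := ⟨fun b => (f.1 (e.symm b)).image e,
    fun b => mem_image.2 ⟨e.symm b, f.2.1 _, e.apply_symm_apply b⟩,
    by
      intro a b hb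
      rw [mem_image] at hb
      obtain ⟨c, hc, rfl⟩ := hb
      simp only [e.symm_apply_apply]
      rw [f.2.2 _ _ hc]⟩
  invFun f := ⟨fun a => (f.1 (e a)).image e.symm,
    fun a => mem_image.2 ⟨e a, f.2.1 _, e.symm_apply_apply a⟩,
    by
      intro a b hb
      rw [mem_image] at hb
      obtain ⟨c, hc, rfl⟩ := hb
      simp only [e.apply_symm_apply]
      rw [f.2.2 _ _ hc]⟩
  left_inv f := by
    apply Subtype.ext
    funext a
    simp [Finset.image_image]
  right_inv f := by
    apply Subtype.ext
    funext b
    simp [Finset.image_image]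

lemma card_ker (α : Type*) [Fintype α] [DecidableEq α] :
    Nat.card (Ker α) = bell (Fintype.card α) := by
  rw [bell, Nat.card_congr (kerEquiv (α := Fin (Fintype.card α))),
    Nat.card_congr (kerCongr (Fintype.equivFin α))]

end DobinskiAux
namespace DobinskiAux

variable {α : Type*} [Fintype α] [DecidableEq α]

/-- The set of companions of `none`. -/
def S (k : Ker (Option α)) : Finset α := (k.1 none).eraseNone

def blockNone (s : Finset α) : Finset (Option α) := insert none (s.image some)

lemma mem_blockNone {s : Finset α} {b : Option α} :
    b ∈ blockNone s ↔ b = none ∨ ∃ a ∈ s, b = some a := by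
  cases b <;> simp [blockNone, eq_comm]

def F (s : Finset α) (g : Ker {x // x ∈ (sᶜ : Finset α)}) : Option α → Finset (Option α) :=
  fun o => Option.elim o (blockNone s)
    (fun a => if ha : a ∈ (sᶜ : Finset α) then (g.1 ⟨a, ha⟩).image (fun y => some y.1)
      else blockNone s)

lemma isKer_F (s : Finset α) (g : Ker {x // x ∈ (sᶜ : Finset α)}) : IsKer (F s g) := by
  constructor
  · intro a
    match a with
    | none => exact mem_insert_self _ _
    | some a =>
      by_cases ha : a ∈ (sᶜ : Finset α)
      · simp only [F, Option.elim, dif_pos ha]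
        exact mem_image.2 ⟨⟨a, ha⟩, g.2.1 _, rfl⟩
      · simp only [F, Option.elim, dif_neg ha, mem_blockNone]
        exact Or.inr ⟨a, by simpa using ha, rfl⟩
  · have key : ∀ b, b ∈ blockNone s → F s g b = blockNone s := by
      intro b hb
      rcases mem_blockNone.1 hb with rfl | ⟨a, ha, rfl⟩
      · rfl
      · have : a ∉ (sᶜ : Finset α) := by simpa using ha
        simp only [F, Option.elim]
        rw [dif_neg this]
    intro a b hb
    match a with
    | none => exact (key b hb).symm
    | some a =>
      by_cases ha : a ∈ (sᶜ : Finset α)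
      · simp only [F, Option.elim, dif_pos ha] at hb ⊢
        rw [mem_image] at hb
        obtain ⟨c, hc, rfl⟩ := hb
        simp only [F, Option.elim, dif_pos c.2]
        rw [g.2.2 ⟨a, ha⟩ ⟨c.1, c.2⟩ (by simpa using hc)]
      · simp only [F, Option.elim, dif_neg ha] at hb
        simp only [F, Option.elim, dif_neg ha]
        exact (key b hb).symm

lemma S_F (s : Finset α) (g : Ker {x // x ∈ (sᶜ : Finset α)}) : S ⟨F s g, isKer_F s g⟩ = s := by
  ext a
  simp [S, F, mem_blockNone, Finset.mem_eraseNone]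

def fiberEquiv (s : Finset α) :
    {k : Ker (Option α) // S k = s} ≃ Ker {x // x ∈ (sᶜ : Finset α)} where
  toFun k :=
    ⟨fun x => univ.filter (fun y : {x // x ∈ (sᶜ : Finset α)} => some y.1 ∈ k.1.1 (some x.1)),
     fun x => mem_filter.2 ⟨mem_univ _, k.1.2.1 (some x.1)⟩,
     by
       intro x y hy
       rw [mem_filter] at hy
       have := k.1.2.2 (some x.1) (some y.1) hy.2
       simp only [this]⟩
  invFun g := ⟨⟨F s g, isKer_F s g⟩, S_F s g⟩
  left_inv := by
    rintro ⟨⟨f, hf1, hf2⟩, hs⟩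
    have hmem : ∀ c : α, some c ∈ f none ↔ c ∈ s := by
      intro c
      rw [← hs]
      simp [S, Finset.mem_eraseNone]
    have hnone : ∀ a : Option α, blockNone s = f a → blockNone s = f a := fun _ h => h
    have hbn : blockNone s = f none := by
      ext b
      rcases b with _ | c
      · simp [mem_blockNone, hf1 none]
      · simp only [mem_blockNone, reduceCtorEq, false_or]
        rw [hmem c]
        constructor
        · rintro ⟨a, ha, h⟩
          obtain rfl : c = a := Option.some_injective _ h
          exact ha
        · intro h; exact ⟨c, h, rfl⟩
    apply Subtype.ext
    apply Subtype.ext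
    funext o
    rcases o with _ | a
    · exact hbn
    · by_cases ha : a ∈ (sᶜ : Finset α)
      · simp only [F, Option.elim, dif_pos ha]
        have hans : a ∉ s := by simpa using ha
        ext b
        rw [mem_image]
        constructor
        · rintro ⟨c, hc, rfl⟩
          exact (mem_filter.1 hc).2
        · intro hb
          rcases b with _ | c
          · exfalso
            have h1 : f (some a) = f none := hf2 (some a) none hb
            have : some a ∈ f none := h1 ▸ hf1 (some a)
            exact hans ((hmem a).1 this)
          · have hcs : c ∉ s := by
              intro hcs
              have h1 : f none = f (some c) := hf2 none (some c) ((hmem c).2 hcs)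
              have h2 : f (some a) = f (some c) := hf2 (some a) (some c) hb
              have : some a ∈ f none := by rw [h1, ← h2]; exact hf1 (some a)
              exact hans ((hmem a).1 this)
            exact ⟨⟨c, by simpa using hcs⟩, mem_filter.2 ⟨mem_univ _, hb⟩, rfl⟩
      · simp only [F, Option.elim, dif_neg ha]
        have has : a ∈ s := by simpa using ha
        have h1 : f none = f (some a) := hf2 none (some a) ((hmem a).2 has)
        rw [← h1]
        exact hbn
  right_inv := by
    intro g
    apply Subtype.ext
    funext x
    ext y
    simp only [mem_filter, mem_univ, true_and, F, Option.elim, dif_pos x.2]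
    rw [mem_image]
    constructor
    · rintro ⟨c, hc, h⟩
      have : c = y := Subtype.ext (by simpa using h)
      rw [← this]
      convert hc using 2
    · intro hy
      refine ⟨y, ?_, rfl⟩
      convert hy using 2

end DobinskiAux
namespace DobinskiAux

lemma nat_card_sigma {ι : Type*} [Fintype ι] (f : ι → Type*) [∀ i, Finite (f i)] :
    Nat.card (Σ i, f i) = ∑ i, Nat.card (f i) := by
  have := fun i => Fintype.ofFinite (f i)
  simp_rw [Nat.card_eq_fintype_card]
  exact Fintype.card_sigma

variable {α : Type*} [Fintype α] [DecidableEq α]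

lemma card_ker_option :
    Nat.card (Ker (Option α)) = ∑ s : Finset α, bell (sᶜ.card) := by
  rw [Nat.card_congr (Equiv.sigmaFiberEquiv (S (α := α))).symm, nat_card_sigma]
  refine Finset.sum_congr rfl fun s _ => ?_
  rw [Nat.card_congr (fiberEquiv s), card_ker, Fintype.card_coe]

lemma bell_succ (n : ℕ) :
    bell (n + 1) = ∑ j ∈ Finset.range (n + 1), n.choose j * bell j := by
  have h1 : bell (n + 1) = Nat.card (Ker (Option (Fin n))) := by
    rw [card_ker, Fintype.card_option, Fintype.card_fin]
  rw [h1, card_ker_option]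
  have h2 : ∀ s : Finset (Fin n), bell (sᶜ.card) = bell (n - s.card) := fun s => by
    rw [Finset.card_compl, Fintype.card_fin]
  rw [Finset.sum_congr rfl fun s _ => h2 s, ← Finset.powerset_univ, Finset.sum_powerset]
  have h3 : ∀ j ∈ Finset.range (n + 1),
      ∑ t ∈ Finset.powersetCard j (Finset.univ : Finset (Fin n)), bell (n - t.card)
        = n.choose j * bell (n - j) := by
    intro j hj
    rw [Finset.sum_congr rfl fun t ht => by
        rw [(Finset.mem_powersetCard.1 ht).2],
      Finset.sum_const, Finset.card_powersetCard, Finset.card_univ, Fintype.card_fin,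
      smul_eq_mul]
  rw [Finset.card_univ, Fintype.card_fin, Finset.sum_congr rfl h3]
  have h4 := Finset.sum_range_reflect (fun j => n.choose j * bell (n - j)) (n + 1)
  rw [← h4]
  refine Finset.sum_congr rfl fun j hj => ?_
  have hjn : j ≤ n := Nat.lt_succ_iff.1 (Finset.mem_range.1 hj)
  simp only [Nat.add_sub_cancel]
  rw [Nat.choose_symm hjn, Nat.sub_sub_self hjn]

end DobinskiAux
namespace DobinskiAux

lemma bell_zero : bell 0 = 1 := by
  have hne : Nonempty (Finpartition (Finset.univ : Finset (Fin 0))) := ⟨⊥⟩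
  have hparts : ∀ P : Finpartition (Finset.univ : Finset (Fin 0)), P.parts = ∅ := by
    intro P
    rw [Finset.eq_empty_iff_forall_notMem]
    intro t ht
    obtain ⟨a, -⟩ := P.nonempty_of_mem_parts ht
    exact a.elim0
  have hsub : Subsingleton (Finpartition (Finset.univ : Finset (Fin 0))) :=
    ⟨fun P Q => Finpartition.ext (by rw [hparts P, hparts Q])⟩
  rw [bell]
  exact Nat.card_unique

lemma binom_div (n m : ℕ) : ((m + 1 : ℕ) : ℝ) ^ (n + 1) / (m + 1).factorial
    = ∑ j ∈ Finset.range (n + 1), (n.choose j : ℝ) * ((m : ℝ) ^ j / m.factorial) := by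
  have hfm : (m.factorial : ℝ) ≠ 0 := Nat.cast_ne_zero.2 m.factorial_ne_zero
  have hm1 : ((m : ℝ) + 1) ≠ 0 := by positivity
  push_cast [Nat.factorial_succ]
  have h1 : ((m : ℝ) + 1) ^ (n + 1) / (((m : ℝ) + 1) * m.factorial)
      = (∑ j ∈ Finset.range (n + 1), (m : ℝ) ^ j * 1 ^ (n - j) * (n.choose j : ℝ))
        / m.factorial := by
    rw [← add_pow, pow_succ]
    field_simp
  rw [h1, Finset.sum_div]
  exact Finset.sum_congr rfl fun j _ => by rw [one_pow]; ring

lemma summable_pow_div_fact : ∀ n : ℕ, Summable (fun k : ℕ => (k : ℝ) ^ n / k.factorial) := by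
  intro n
  induction n using Nat.strong_induction_on with
  | _ n ih =>
    match n, ih with
    | 0, _ => simpa using Real.summable_pow_div_factorial 1
    | n + 1, ih =>
      rw [← summable_nat_add_iff 1]
      have hs : Summable (fun m : ℕ =>
          ∑ j ∈ Finset.range (n + 1), (n.choose j : ℝ) * ((m : ℝ) ^ j / m.factorial)) :=
        summable_sum fun j hj =>
          ((ih j (Finset.mem_range.1 hj)).mul_left _)
      exact hs.congr fun m => (binom_div n m).symm

lemma summable_g (n : ℕ) :
    Summable (fun k : ℕ => Real.exp (-1) * (k : ℝ) ^ n / k.factorial) := by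
  simpa [mul_div_assoc] using (summable_pow_div_fact n).mul_left (Real.exp (-1))

end DobinskiAux

/-- The n-th moment of a Poisson(1) random variable is the n-th Bell number. -/
theorem poisson_one_moment_eq_bell (n : ℕ) :
    ∑' k : ℕ, Real.exp (-1) * (k : ℝ) ^ n / k.factorial = bell n := by
  induction n using Nat.strong_induction_on with
  | _ n ih =>
    match n, ih with
    | 0, _ =>
      rw [DobinskiAux.bell_zero]
      have hsum : HasSum (fun k : ℕ => (1 : ℝ) ^ k / k.factorial) (Real.exp 1) := by
        simpa [Real.exp_eq_exp_ℝ] using NormedSpace.expSeries_div_hasSum_exp (1 : ℝ)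
      have hfun : (fun k : ℕ => Real.exp (-1) * (k : ℝ) ^ 0 / k.factorial)
          = fun k : ℕ => Real.exp (-1) * ((1 : ℝ) ^ k / k.factorial) := by
        funext k
        rw [pow_zero, one_pow, mul_div_assoc]
      rw [hfun, (hsum.mul_left _).tsum_eq, ← Real.exp_add]
      norm_num
    | n + 1, ih =>
      rw [(DobinskiAux.summable_g (n + 1)).tsum_eq_zero_add]
      have h0 : Real.exp (-1) * ((0 : ℕ) : ℝ) ^ (n + 1) / (Nat.factorial 0) = 0 := by
        simp
      rw [h0, zero_add]
      have key2 : ∀ m : ℕ, Real.exp (-1) * ((m + 1 : ℕ) : ℝ) ^ (n + 1) / (m + 1).factorial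
          = ∑ j ∈ Finset.range (n + 1),
              (n.choose j : ℝ) * (Real.exp (-1) * ((m : ℝ) ^ j / m.factorial)) := by
        intro m
        rw [mul_div_assoc, DobinskiAux.binom_div n m, Finset.mul_sum]
        exact Finset.sum_congr rfl fun j _ => by ring
      have hswap := Summable.tsum_finsetSum
        (f := fun j (m : ℕ) => (n.choose j : ℝ) * (Real.exp (-1) * ((m : ℝ) ^ j / m.factorial)))
        (s := Finset.range (n + 1))
        (fun j _ =>
          (((DobinskiAux.summable_pow_div_fact j).mul_left (Real.exp (-1))).mul_left _))
      rw [tsum_congr key2, hswap]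
      simp_rw [tsum_mul_left]
      rw [DobinskiAux.bell_succ n]
      push_cast
      refine Finset.sum_congr rfl fun j hj => ?_
      congr 1
      rw [← tsum_mul_left, ← ih j (Finset.mem_range.1 hj)]
      exact tsum_congr fun k => by rw [mul_div_assoc]
end

section
/- Let n ≥ mk and let σ be a uniformly random permutation of [n]. Then the k-th moment of C_m^{(n)}, the number of m-cycles of σ, equals T_k(1/m) = ∑_{l=1}^k S(k,l) / m^l. -/
open scoped BigOperators

noncomputable def stirling2 (n j : ℕ) : ℕ :=
  Nat.card {P : Finpartition (Finset.univ : Finset (Fin n)) // P.parts.card = j}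

noncomputable def cycleCount {n : ℕ} (σ : Equiv.Perm (Fin n)) (m : ℕ) : ℕ :=
  Nat.card {D : Finset (Fin n) // D.card = m ∧ σ.IsCycleOn ↑D}

namespace MomentAux

open Equiv Function Finset
open Fin.NatCast

variable {n m l : ℕ}

/-- The permutation of `Fin n` that rotates each of the `l` blocks of size `m`
given by `ι` and fixes everything else. -/
noncomputable def rotC (ι : Fin l × Fin m → Fin n) [NeZero m] : Equiv.Perm (Fin n) :=
  letI := Classical.decPred (· ∈ Set.range ι)
  if hι : Function.Injective ι then
    Equiv.Perm.extendDomain (Equiv.prodCongr (Equiv.refl (Fin l)) (Equiv.addRight (1 : Fin m)))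
      (Equiv.ofInjective ι hι)
  else 1

lemma rotC_apply [NeZero m] {ι : Fin l × Fin m → Fin n} (hι : Function.Injective ι)
    (i : Fin l) (j : Fin m) : rotC ι (ι (i, j)) = ι (i, j + 1) := by
  classical
  rw [rotC]
  letI := Classical.decPred (· ∈ Set.range ι)
  rw [dif_pos hι]
  have h1 : ι (i, j) = ((Equiv.ofInjective ι hι (i, j) : Set.range ι) : Fin n) := rfl
  rw [h1, Equiv.Perm.extendDomain_apply_image]
  rfl

/-- The type of a permutation together with `l` marked distinct `m`-cycles,
each with a marked point. -/
def EType (n m l : ℕ) : Type :=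
  {sdx : Equiv.Perm (Fin n) × ((Fin l → Finset (Fin n)) × (Fin l → Fin n)) //
    Function.Injective sdx.2.1 ∧ ∀ i, (sdx.2.1 i).card = m ∧ sdx.1.IsCycleOn ↑(sdx.2.1 i) ∧
      sdx.2.2 i ∈ sdx.2.1 i}

/-- The type of an injective `l × m`-indexed family in `Fin n` together with a permutation
fixing its range pointwise. -/
def FType (n m l : ℕ) : Type :=
  {it : ((Fin l × Fin m) → Fin n) × Equiv.Perm (Fin n) //
    Function.Injective it.1 ∧ ∀ p, it.2 (it.1 p) = it.1 p}

section Bwd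

variable [NeZero m] {ι : Fin l × Fin m → Fin n} {τ : Equiv.Perm (Fin n)}

lemma mulRot_apply (hι : Function.Injective ι) (hτ : ∀ p, τ (ι p) = ι p)
    (i : Fin l) (j : Fin m) : (τ * rotC ι) (ι (i, j)) = ι (i, j + 1) := by
  simp [Equiv.Perm.mul_apply, rotC_apply hι, hτ (i, j + 1)]

lemma mulRot_pow_apply (hι : Function.Injective ι) (hτ : ∀ p, τ (ι p) = ι p)
    (t : ℕ) (i : Fin l) (j : Fin m) :
    ((τ * rotC ι) ^ t) (ι (i, j)) = ι (i, j + (t : Fin m)) := by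
  induction t generalizing j with
  | zero => simp
  | succ t ih =>
    rw [pow_succ, Equiv.Perm.mul_apply, mulRot_apply hι hτ, ih]
    congr 2
    push_cast
    abel

/-- From `(ι, τ)` build the permutation with marked cycles. -/
noncomputable def bwd (z : FType n m l) : EType n m l :=
  ⟨(z.1.2 * rotC z.1.1,
    (fun i => Finset.image (fun j => z.1.1 (i, j)) Finset.univ,
     fun i => z.1.1 (i, 0))), by
    obtain ⟨⟨ι, τ⟩, hι, hτ⟩ := z
    dsimp only
    have hmem : ∀ i j, ι (i, j) ∈ Finset.image (fun j => ι (i, j)) Finset.univ := by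
      intro i j; exact Finset.mem_image.2 ⟨j, Finset.mem_univ _, rfl⟩
    constructor
    · intro i i' hii'
      dsimp only at hii'
      have h0 : ι (i, 0) ∈ Finset.image (fun j => ι (i', j)) Finset.univ := by
        rw [← hii']; exact hmem i 0
      obtain ⟨j, -, hj⟩ := Finset.mem_image.1 h0
      exact (Prod.ext_iff.1 (hι hj : (i', j) = (i, 0))).1.symm
    · intro i
      refine ⟨?_, ⟨⟨?_, (τ * rotC ι).injective.injOn, ?_⟩, ?_⟩, hmem i 0⟩
      · rw [Finset.card_image_of_injective _ (fun a b hab => (Prod.ext_iff.1 (hι hab)).2),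
          Finset.card_univ, Fintype.card_fin]
      · rintro y hy
        obtain ⟨j, -, rfl⟩ := Finset.mem_image.1 (Finset.mem_coe.1 hy)
        exact Finset.mem_coe.2 (mulRot_apply hι hτ i j ▸ hmem i (j + 1))
      · rintro y hy
        obtain ⟨j, -, rfl⟩ := Finset.mem_image.1 (Finset.mem_coe.1 hy)
        refine ⟨ι (i, j - 1), Finset.mem_coe.2 (hmem i (j - 1)), ?_⟩
        rw [mulRot_apply hι hτ, sub_add_cancel]
      · rintro y hy y' hy'
        obtain ⟨j, -, rfl⟩ := Finset.mem_image.1 (Finset.mem_coe.1 hy)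
        obtain ⟨j', -, rfl⟩ := Finset.mem_image.1 (Finset.mem_coe.1 hy')
        refine ⟨(((j' - j : Fin m) : ℕ) : ℤ), ?_⟩
        rw [zpow_natCast, mulRot_pow_apply hι hτ, Fin.cast_val_eq_self, add_sub_cancel]⟩

end Bwd

section Fwd

variable {σ : Equiv.Perm (Fin n)}

lemma pow_mem {s : Finset (Fin n)} (hc : σ.IsCycleOn ↑s) {y : Fin n} (hy : y ∈ s) (t : ℕ) :
    (σ ^ t) y ∈ s := by
  induction t with
  | zero => simpa
  | succ t ih =>
    rw [pow_succ', Equiv.Perm.mul_apply]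
    exact Finset.mem_coe.1 (hc.apply_mem_iff.2 (Finset.mem_coe.2 ih))

lemma period_mod {y : Fin n} {d : ℕ} (hy : (σ ^ d) y = y) (t : ℕ) :
    (σ ^ t) y = (σ ^ (t % d)) y := by
  have key : ∀ q, (σ ^ (d * q)) y = y := by
    intro q
    induction q with
    | zero => simp
    | succ q ih => rw [Nat.mul_succ, pow_add, Equiv.Perm.mul_apply, hy, ih]
  conv_lhs => rw [← Nat.mod_add_div t d]
  rw [pow_add, Equiv.Perm.mul_apply, key]

lemma subset_of_cycles {s s' : Finset (Fin n)} (hs : σ.IsCycleOn ↑s) (hs' : σ.IsCycleOn ↑s')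
    {y : Fin n} (hy : y ∈ s) (hy' : y ∈ s') : s ⊆ s' := by
  intro z hz
  obtain ⟨t, -, rfl⟩ := hs.exists_pow_eq hy hz
  exact pow_mem hs' hy' t

variable [NeZero m] {D : Fin l → Finset (Fin n)} {x : Fin l → Fin n}
  (hD : Function.Injective D)
  (h : ∀ i, (D i).card = m ∧ σ.IsCycleOn ↑(D i) ∧ x i ∈ D i)

include h

lemma fwd_pow_mod (i : Fin l) (t : ℕ) : (σ ^ t) (x i) = (σ ^ (t % m)) (x i) :=
  period_mod (by rw [show m = (D i).card from ((h i).1).symm]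
                 exact (h i).2.1.pow_card_apply (Finset.mem_coe.2 (h i).2.2)) t

lemma fwd_pow_cast (i : Fin l) (t : ℕ) :
    (σ ^ t) (x i) = (σ ^ (((t : Fin m)) : ℕ)) (x i) := by
  rw [Fin.val_natCast]; exact fwd_pow_mod h i t

include hD

lemma fwd_inj :
    Function.Injective (fun p : Fin l × Fin m => (σ ^ ((p.2 : Fin m) : ℕ)) (x p.1)) := by
  have claim : ∀ i, ∀ a b : Fin m, (a : ℕ) ≤ (b : ℕ) →
      (σ ^ (a : ℕ)) (x i) = (σ ^ (b : ℕ)) (x i) → a = b := by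
    intro i a b hab heq
    have hd : (σ ^ ((b : ℕ) - (a : ℕ))) (x i) = x i := by
      apply (σ ^ (a : ℕ)).injective
      rw [← Equiv.Perm.mul_apply, ← pow_add, Nat.add_sub_cancel' hab, ← heq]
    by_contra hne
    have hpos : 0 < (b : ℕ) - (a : ℕ) := by
      have : (a : ℕ) ≠ (b : ℕ) := fun hc => hne (Fin.val_injective hc)
      omega
    have hsub : D i ⊆ Finset.image (fun t => (σ ^ t) (x i))
        (Finset.range ((b : ℕ) - (a : ℕ))) := by
      intro z hz
      obtain ⟨t, -, rfl⟩ := (h i).2.1.exists_pow_eq (h i).2.2 hz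
      rw [period_mod hd t]
      exact Finset.mem_image.2 ⟨t % _, Finset.mem_range.2 (Nat.mod_lt _ hpos), rfl⟩
    have hcard := Finset.card_le_card hsub
    rw [(h i).1] at hcard
    have hle : m ≤ (b : ℕ) - (a : ℕ) :=
      le_trans hcard (le_trans Finset.card_image_le (le_of_eq (Finset.card_range _)))
    have := b.isLt
    omega
  rintro ⟨i, a⟩ ⟨i', b⟩ hp
  dsimp only at hp
  have hi : i = i' := by
    apply hD
    have hy : (σ ^ (a : ℕ)) (x i) ∈ D i := pow_mem (h i).2.1 (h i).2.2 _
    have hy' : (σ ^ (a : ℕ)) (x i) ∈ D i' := by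
      rw [hp]; exact pow_mem (h i').2.1 (h i').2.2 _
    exact Finset.Subset.antisymm
      (subset_of_cycles (h i).2.1 (h i').2.1 hy hy')
      (subset_of_cycles (h i').2.1 (h i).2.1 hy' hy)
  subst hi
  rcases le_total (a : ℕ) (b : ℕ) with hab | hab
  · exact Prod.ext rfl (claim i a b hab hp)
  · exact Prod.ext rfl (claim i b a hab hp.symm).symm

end Fwd

section EquivDef

variable [NeZero m]

/-- From a permutation with marked cycles and points, build `(ι, τ)`. -/
noncomputable def fwd (z : EType n m l) : FType n m l :=
  ⟨(fun p => (z.1.1 ^ ((p.2 : Fin m) : ℕ)) (z.1.2.2 p.1),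
    z.1.1 * (rotC (fun p => (z.1.1 ^ ((p.2 : Fin m) : ℕ)) (z.1.2.2 p.1)))⁻¹), by
    obtain ⟨⟨σ, D, x⟩, hD, h⟩ := z
    dsimp only
    have hι := fwd_inj hD h
    refine ⟨hι, ?_⟩
    rintro ⟨i, j⟩
    rw [Equiv.Perm.mul_apply]
    have hinv : (rotC (fun p : Fin l × Fin m => (σ ^ ((p.2 : Fin m) : ℕ)) (x p.1)))⁻¹
        ((σ ^ ((j : Fin m) : ℕ)) (x i)) = (σ ^ (((j - 1 : Fin m)) : ℕ)) (x i) := by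
      apply Equiv.injective (rotC (fun p : Fin l × Fin m => (σ ^ ((p.2 : Fin m) : ℕ)) (x p.1)))
      rw [show ∀ (e : Equiv.Perm (Fin n)) y, e (e⁻¹ y) = y from fun e y => e.apply_symm_apply y]
      have h2 := rotC_apply hι i (j - 1)
      dsimp only at h2
      rw [h2, sub_add_cancel]
    rw [hinv, ← Equiv.Perm.mul_apply, ← pow_succ', fwd_pow_cast h i]
    have hcast : ((((j - 1 : Fin m) : ℕ) + 1 : ℕ) : Fin m) = j := by
      push_cast [Fin.cast_val_eq_self]
      exact sub_add_cancel j 1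
    rw [hcast]⟩

/-- The bijection between marked-cycle data and `(ι, τ)`-data. -/
noncomputable def EFEquiv : EType n m l ≃ FType n m l where
  toFun := fwd
  invFun := bwd
  left_inv := by
    rintro ⟨⟨σ, D, x⟩, hD, h⟩
    apply Subtype.ext
    simp only [fwd, bwd]
    refine Prod.ext ?_ (Prod.ext ?_ ?_)
    · exact inv_mul_cancel_right σ _
    · funext i
      ext z
      simp only [Finset.mem_image, Finset.mem_univ, true_and]
      constructor
      · rintro ⟨j, rfl⟩
        exact pow_mem (h i).2.1 (h i).2.2 _
      · intro hz
        obtain ⟨t, ht, rfl⟩ := (h i).2.1.exists_pow_eq (h i).2.2 hz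
        rw [(h i).1] at ht
        exact ⟨⟨t, ht⟩, rfl⟩
    · funext i
      simp
  right_inv := by
    rintro ⟨⟨ι, τ⟩, hι, hτ⟩
    apply Subtype.ext
    simp only [fwd, bwd]
    have hι' : (fun p : Fin l × Fin m =>
        (((τ * rotC ι) : Equiv.Perm (Fin n)) ^ ((p.2 : Fin m) : ℕ)) (ι (p.1, 0))) = ι := by
      funext p
      rw [mulRot_pow_apply hι hτ, Fin.cast_val_eq_self, zero_add]
    refine Prod.ext ?_ ?_
    · exact hι'
    · dsimp only
      rw [hι', mul_inv_cancel_right]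

end EquivDef

section Counting

/-- Repackage `FType` as a sigma type. -/
def FSigma : FType n m l ≃
    Σ ι : (Fin l × Fin m) ↪ Fin n, {τ : Equiv.Perm (Fin n) // ∀ p, τ (ι p) = ι p} where
  toFun z := ⟨⟨z.1.1, z.2.1⟩, z.1.2, z.2.2⟩
  invFun w := ⟨(w.1, w.2.1), w.1.2, w.2.2⟩
  left_inv _ := rfl
  right_inv _ := rfl

lemma card_FType (hml : l * m ≤ n) : Nat.card (FType n m l) = n.factorial := by
  classical
  rw [Nat.card_congr (FSigma (n := n) (m := m) (l := l)), Nat.card_eq_fintype_card,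
    Fintype.card_sigma]
  have key : ∀ ι : (Fin l × Fin m) ↪ Fin n,
      Fintype.card {τ : Equiv.Perm (Fin n) // ∀ p, τ (ι p) = ι p} = (n - l * m).factorial := by
    intro ι
    have e1 : Equiv.Perm {y : Fin n // ¬ y ∈ Set.range ι} ≃
        {τ : Equiv.Perm (Fin n) // ∀ p, τ (ι p) = ι p} :=
      (Equiv.Perm.subtypeEquivSubtypePerm (fun y => ¬ y ∈ Set.range ι)).trans
        (Equiv.subtypeEquivRight (fun f =>
          ⟨fun hf p => hf (ι p) (not_not_intro ⟨p, rfl⟩),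
           fun hf a ha => by obtain ⟨p, rfl⟩ := not_not.1 ha; exact hf p⟩))
    rw [← Fintype.card_congr e1, Fintype.card_perm, Fintype.card_subtype_compl]
    congr 2
    rw [Fintype.card_fin]
    have : Fintype.card {x : Fin n // x ∈ Set.range ι} = Fintype.card (Set.range ⇑ι) := rfl
    rw [this, Set.card_range_of_injective ι.injective, Fintype.card_prod, Fintype.card_fin,
      Fintype.card_fin]
  calc (∑ ι : (Fin l × Fin m) ↪ Fin n,
      Fintype.card {τ : Equiv.Perm (Fin n) // ∀ p, τ (ι p) = ι p})
      = ∑ _ι : (Fin l × Fin m) ↪ Fin n, (n - l * m).factorial :=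
        Finset.sum_congr rfl (fun ι _ => key ι)
    _ = n.descFactorial (l * m) * (n - l * m).factorial := by
        rw [Finset.sum_const, smul_eq_mul, Finset.card_univ, Fintype.card_embedding_eq,
          Fintype.card_prod, Fintype.card_fin, Fintype.card_fin, Fintype.card_fin]
    _ = n.factorial := by
        rw [mul_comm, Nat.factorial_mul_descFactorial hml]

/-- Repackage `EType` as a sigma type over the permutation. -/
def ESigma : EType n m l ≃
    Σ σ : Equiv.Perm (Fin n),
      {dx : (Fin l → Finset (Fin n)) × (Fin l → Fin n) //
        Function.Injective dx.1 ∧ ∀ i, (dx.1 i).card = m ∧ σ.IsCycleOn ↑(dx.1 i) ∧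
          dx.2 i ∈ dx.1 i} where
  toFun z := ⟨z.1.1, ⟨z.1.2, z.2⟩⟩
  invFun w := ⟨(w.1, w.2.1), w.2.2⟩
  left_inv _ := rfl
  right_inv _ := rfl

/-- Repackage one fiber of `ESigma` as embeddings into cycles plus marked points. -/
def fiberEquiv (σ : Equiv.Perm (Fin n)) :
    {dx : (Fin l → Finset (Fin n)) × (Fin l → Fin n) //
        Function.Injective dx.1 ∧ ∀ i, (dx.1 i).card = m ∧ σ.IsCycleOn ↑(dx.1 i) ∧
          dx.2 i ∈ dx.1 i} ≃
    Σ g : Fin l ↪ {D : Finset (Fin n) // D.card = m ∧ σ.IsCycleOn ↑D},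
      Π i : Fin l, {y : Fin n // y ∈ (g i).1} where
  toFun z := ⟨⟨fun i => ⟨z.1.1 i, (z.2.2 i).1, (z.2.2 i).2.1⟩,
      fun i i' hii' => z.2.1 (congrArg Subtype.val hii')⟩,
    fun i => ⟨z.1.2 i, (z.2.2 i).2.2⟩⟩
  invFun w := ⟨(fun i => (w.1 i).1, fun i => (w.2 i).1),
    fun i i' hii' => w.1.injective (Subtype.ext hii'),
    fun i => ⟨(w.1 i).2.1, (w.1 i).2.2, (w.2 i).2⟩⟩
  left_inv _ := rfl
  right_inv _ := rfl

lemma card_EType :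
    Nat.card (EType n m l) =
      ∑ σ : Equiv.Perm (Fin n), (cycleCount σ m).descFactorial l * m ^ l := by
  classical
  rw [Nat.card_congr (ESigma (n := n) (m := m) (l := l)), Nat.card_eq_fintype_card,
    Fintype.card_sigma]
  refine Finset.sum_congr rfl (fun σ _ => ?_)
  rw [← Nat.card_eq_fintype_card, Nat.card_congr (fiberEquiv σ), Nat.card_eq_fintype_card,
    Fintype.card_sigma]
  have key : ∀ g : Fin l ↪ {D : Finset (Fin n) // D.card = m ∧ σ.IsCycleOn ↑D},
      Fintype.card (Π i : Fin l, {y : Fin n // y ∈ (g i).1}) = m ^ l := by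
    intro g
    rw [Fintype.card_pi]
    have : ∀ i : Fin l, Fintype.card {y : Fin n // y ∈ (g i).1} = m := by
      intro i
      have h1 : Fintype.card {y : Fin n // y ∈ (g i).1} = ((g i).1).card := Fintype.card_coe _
      rw [h1, (g i).2.1]
    rw [Finset.prod_congr rfl (fun i _ => this i), Finset.prod_const, Finset.card_univ,
      Fintype.card_fin]
  rw [Finset.sum_congr rfl (fun g _ => key g), Finset.sum_const, smul_eq_mul, Finset.card_univ,
    Fintype.card_embedding_eq, Fintype.card_fin]
  congr 2
  rw [cycleCount, Nat.card_eq_fintype_card]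

lemma sum_descFactorial_mul (hm : 1 ≤ m) (hml : m * l ≤ n) :
    (∑ σ : Equiv.Perm (Fin n), (cycleCount σ m).descFactorial l) * m ^ l = n.factorial := by
  haveI : NeZero m := ⟨by omega⟩
  rw [Finset.sum_mul]
  rw [← card_EType, Nat.card_congr (EFEquiv (n := n) (m := m) (l := l)),
    card_FType (by rw [mul_comm] at hml; exact hml)]

end Counting

section Stirling

variable {k c : ℕ}

/-- The partition of `Fin k` into fibers of `f`. -/
noncomputable def fiberPartition (f : Fin k → Fin c) : Finpartition (Finset.univ : Finset (Fin k)) :=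
  letI := Classical.decRel (Setoid.ker f).r
  Finpartition.ofSetoid (Setoid.ker f)

lemma mem_part_fiberPartition (f : Fin k → Fin c) (a b : Fin k) :
    b ∈ (fiberPartition f).part a ↔ f a = f b := by
  classical
  rw [fiberPartition]
  exact Finpartition.mem_part_ofSetoid_iff_rel

lemma parts_eq_image_part (P : Finpartition (Finset.univ : Finset (Fin k))) :
    P.parts = Finset.univ.image P.part := by
  ext p
  constructor
  · intro hp
    obtain ⟨a, ha⟩ := P.nonempty_of_mem_parts hp
    exact Finset.mem_image.2 ⟨a, Finset.mem_univ _, P.part_eq_of_mem hp ha⟩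
  · rintro hp
    obtain ⟨a, -, rfl⟩ := Finset.mem_image.1 hp
    exact P.part_mem.2 (Finset.mem_univ a)

lemma finpartition_eq_of_part_eq {P Q : Finpartition (Finset.univ : Finset (Fin k))}
    (h : ∀ a, P.part a = Q.part a) : P = Q := by
  ext1
  rw [parts_eq_image_part, parts_eq_image_part]
  exact Finset.image_congr (fun a _ => h a)

/-- Functions with fiber partition `P` are in bijection with embeddings of the parts. -/
noncomputable def fiberFunEquiv (P : Finpartition (Finset.univ : Finset (Fin k))) :
    {f : Fin k → Fin c // fiberPartition f = P} ≃ (↥P.parts ↪ Fin c) where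
  toFun z := ⟨fun p => z.1 (P.nonempty_of_mem_parts p.2).choose, by
    obtain ⟨f, rfl⟩ := z
    rintro ⟨p, hp⟩ ⟨p', hp'⟩ hpp'
    dsimp only at hpp'
    have h1 := (mem_part_fiberPartition f _ _).2 hpp'
    rw [(fiberPartition f).part_eq_of_mem hp
      ((fiberPartition f).nonempty_of_mem_parts hp).choose_spec] at h1
    exact Subtype.ext ((fiberPartition f).eq_of_mem_parts hp hp' h1
      ((fiberPartition f).nonempty_of_mem_parts hp').choose_spec)⟩
  invFun g := ⟨fun a => g ⟨P.part a, P.part_mem.2 (Finset.mem_univ a)⟩, by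
    refine finpartition_eq_of_part_eq (fun a => ?_)
    ext b
    rw [mem_part_fiberPartition]
    constructor
    · intro hab
      have h1 : P.part a = P.part b := congrArg Subtype.val (g.injective hab)
      rw [h1]
      exact P.mem_part (Finset.mem_univ b)
    · intro hb
      exact congrArg g (Subtype.ext
        ((P.mem_part_iff_part_eq_part (Finset.mem_univ b) (Finset.mem_univ a)).1 hb).symm)⟩
  left_inv := by
    rintro ⟨f, rfl⟩
    refine Subtype.ext (funext fun a => ?_)
    dsimp only
    have hmem : ((fiberPartition f).nonempty_of_mem_parts
        ((fiberPartition f).part_mem.2 (Finset.mem_univ a))).choose ∈ (fiberPartition f).part a :=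
      ((fiberPartition f).nonempty_of_mem_parts
        ((fiberPartition f).part_mem.2 (Finset.mem_univ a))).choose_spec
    exact ((mem_part_fiberPartition f a _).1 hmem).symm
  right_inv := by
    intro g
    refine Function.Embedding.ext (fun p => ?_)
    dsimp only
    refine congrArg g (Subtype.ext ?_)
    exact P.part_eq_of_mem p.2 (P.nonempty_of_mem_parts p.2).choose_spec

lemma pow_eq_sum_finpartition (c k : ℕ) :
    c ^ k = ∑ P : Finpartition (Finset.univ : Finset (Fin k)), c.descFactorial P.parts.card := by
  classical
  have e : (Fin k → Fin c) ≃
      Σ P : Finpartition (Finset.univ : Finset (Fin k)), (↥P.parts ↪ Fin c) :=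
    (Equiv.sigmaFiberEquiv fiberPartition).symm.trans
      (Equiv.sigmaCongrRight fun P => fiberFunEquiv P)
  have h1 : Fintype.card (Fin k → Fin c) = c ^ k := by
    rw [Fintype.card_fun, Fintype.card_fin, Fintype.card_fin]
  rw [← h1, Fintype.card_congr e, Fintype.card_sigma]
  refine Finset.sum_congr rfl (fun P _ => ?_)
  rw [Fintype.card_embedding_eq, Fintype.card_fin, Fintype.card_coe]

lemma pow_eq_sum_stirling (c k : ℕ) (hk : 1 ≤ k) :
    c ^ k = ∑ j ∈ Finset.Icc 1 k, stirling2 k j * c.descFactorial j := by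
  classical
  rw [pow_eq_sum_finpartition c k]
  rw [← Finset.sum_fiberwise_of_maps_to
    (g := fun P : Finpartition (Finset.univ : Finset (Fin k)) => P.parts.card)
    (fun P _ => ?_) (fun P => c.descFactorial P.parts.card)]
  · refine Finset.sum_congr rfl (fun j hj => ?_)
    have : ∀ P ∈ Finset.univ.filter
        (fun P : Finpartition (Finset.univ : Finset (Fin k)) => P.parts.card = j),
        c.descFactorial P.parts.card = c.descFactorial j := by
      intro P hP
      rw [(Finset.mem_filter.1 hP).2]
    rw [Finset.sum_congr rfl this, Finset.sum_const, smul_eq_mul]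
    congr 1
    rw [stirling2, Nat.card_eq_fintype_card, Fintype.card_subtype]
  · rw [Finset.mem_Icc]
    constructor
    · have h2 : P.parts.Nonempty := P.parts_nonempty (by
        rw [Finset.bot_eq_empty, ← Finset.nonempty_iff_ne_empty]
        exact ⟨⟨0, hk⟩, Finset.mem_univ _⟩)
      exact Finset.card_pos.2 h2
    · have := P.card_parts_le_card
      rwa [Finset.card_univ, Fintype.card_fin] at this

end Stirling

end MomentAux

/-- The k-th moment of the number of m-cycles of a uniform permutation of [n],
for n ≥ mk, equals T_k(1/m) = ∑_{l=1}^k S(k,l)/m^l. -/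
theorem moment_cycleCount (n m k : ℕ) (hm : 1 ≤ m) (hk : 1 ≤ k) (hn : m * k ≤ n) :
    (∑ σ : Equiv.Perm (Fin n), (cycleCount σ m : ℝ) ^ k) / n.factorial =
      ∑ l ∈ Finset.Icc 1 k, (stirling2 k l : ℝ) * (1 / m) ^ l := by
  have hn0 : (n.factorial : ℝ) ≠ 0 := Nat.cast_ne_zero.2 (Nat.factorial_ne_zero n)
  have hm0 : (m : ℝ) ≠ 0 := Nat.cast_ne_zero.2 (by omega)
  have hsum : (∑ σ : Equiv.Perm (Fin n), (cycleCount σ m : ℝ) ^ k)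
      = ∑ j ∈ Finset.Icc 1 k, (stirling2 k j : ℝ) * ((n.factorial : ℝ) / (m : ℝ) ^ j) := by
    have h1 : ∀ σ : Equiv.Perm (Fin n), (cycleCount σ m : ℝ) ^ k
        = ∑ j ∈ Finset.Icc 1 k,
            (stirling2 k j : ℝ) * ((cycleCount σ m).descFactorial j : ℝ) := by
      intro σ
      have h2 := congrArg (Nat.cast (R := ℝ)) (MomentAux.pow_eq_sum_stirling (cycleCount σ m) k hk)
      push_cast at h2
      exact h2
    rw [Finset.sum_congr rfl (fun σ _ => h1 σ), Finset.sum_comm]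
    refine Finset.sum_congr rfl (fun j hj => ?_)
    rw [← Finset.mul_sum]
    congr 1
    have hA := MomentAux.sum_descFactorial_mul (n := n) (l := j) hm
      (le_trans (Nat.mul_le_mul le_rfl (Finset.mem_Icc.1 hj).2) hn)
    have h3 := congrArg (Nat.cast (R := ℝ)) hA
    push_cast at h3
    rw [eq_div_iff (pow_ne_zero j hm0)]
    exact h3
  rw [hsum, Finset.sum_div]
  refine Finset.sum_congr rfl (fun j hj => ?_)
  rw [mul_div_assoc]
  congr 1
  rw [div_pow, one_pow]
  field_simp
end

section
/- For a permutation σ of [n], the number of m-element subsets A ⊆ [n] with σ(A) = A equals the sum over tuples (l_1,…,l_m) of nonnegative integers with ∑_{j=1}^m j·l_j = m of ∏_{j=1}^m C(C_j^{(n)}(σ), l_j). -/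
open scoped BigOperators

namespace CFAux

variable {n : ℕ} {σ : Equiv.Perm (Fin n)}

lemma coe_eq_sameCycle {D : Finset (Fin n)} (hD : σ.IsCycleOn ↑D) {x : Fin n} (hx : x ∈ D) :
    (D : Set (Fin n)) = {y | σ.SameCycle x y} := by
  rw [← hD.range_zpow (Finset.mem_coe.2 hx)]
  ext y
  simp [Equiv.Perm.SameCycle]

lemma cycle_eq {D E : Finset (Fin n)} (hD : σ.IsCycleOn ↑D) (hE : σ.IsCycleOn ↑E)
    {x : Fin n} (hxD : x ∈ D) (hxE : x ∈ E) : D = E :=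
  Finset.coe_injective ((coe_eq_sameCycle hD hxD).trans (coe_eq_sameCycle hE hxE).symm)

lemma cycle_disjoint {D E : Finset (Fin n)} (hD : σ.IsCycleOn ↑D) (hE : σ.IsCycleOn ↑E)
    (hne : D ≠ E) : Disjoint D E := by
  by_contra h
  obtain ⟨x, hxD, hxE⟩ := Finset.not_disjoint_iff.1 h
  exact hne (cycle_eq hD hE hxD hxE)

lemma image_cycle_eq {D : Finset (Fin n)} (hD : σ.IsCycleOn ↑D) : D.image σ = D := by
  apply Finset.eq_of_subset_of_card_le
  · intro y hy
    obtain ⟨z, hz, rfl⟩ := Finset.mem_image.1 hy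
    exact Finset.mem_coe.1 (hD.1.mapsTo (Finset.mem_coe.2 hz))
  · rw [Finset.card_image_of_injective _ σ.injective]

noncomputable def orb (σ : Equiv.Perm (Fin n)) (x : Fin n) : Finset (Fin n) :=
  (Set.toFinite {y | σ.SameCycle x y}).toFinset

lemma coe_orb {x : Fin n} : (orb σ x : Set (Fin n)) = {y | σ.SameCycle x y} :=
  Set.Finite.coe_toFinset _

lemma mem_orb {x y : Fin n} : y ∈ orb σ x ↔ σ.SameCycle x y := by
  rw [← Finset.mem_coe, coe_orb]; rfl

lemma self_mem_orb {x : Fin n} : x ∈ orb σ x := mem_orb.2 (Equiv.Perm.SameCycle.refl _ _)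

lemma isCycleOn_orb {x : Fin n} : σ.IsCycleOn ↑(orb σ x) := by
  rw [coe_orb]
  refine ⟨⟨fun y hy => hy.apply_right, σ.injective.injOn, fun y hy => ?_⟩,
    fun y hy z hz => hy.symm.trans hz⟩
  exact ⟨σ⁻¹ y, Equiv.Perm.SameCycle.symm_apply_right hy, σ.apply_symm_apply y⟩

lemma bijOn_of_image_eq {A : Finset (Fin n)} (hA : A.image σ = A) :
    Set.BijOn σ ↑A ↑A := by
  refine ⟨fun a ha => ?_, σ.injective.injOn, fun a ha => ?_⟩
  · exact Finset.mem_coe.2 (hA ▸ Finset.mem_image_of_mem σ (Finset.mem_coe.1 ha))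
  · obtain ⟨b, hb, hba⟩ := Finset.mem_image.1 (hA.symm ▸ Finset.mem_coe.1 ha)
    exact ⟨b, Finset.mem_coe.2 hb, hba⟩

lemma orb_subset {A : Finset (Fin n)} (hA : A.image σ = A) {x : Fin n} (hx : x ∈ A) :
    orb σ x ⊆ A := by
  intro y hy
  obtain ⟨k, hk⟩ := mem_orb.1 hy
  have := ((bijOn_of_image_eq hA).perm_zpow k).mapsTo (Finset.mem_coe.2 hx)
  rw [hk] at this
  exact Finset.mem_coe.1 this

end CFAux

/-- The number of m-sets fixed by σ in terms of its cycle counts. -/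
theorem card_fixed_sets_eq_sum (n m : ℕ) (σ : Equiv.Perm (Fin n)) :
    Nat.card {A : Finset (Fin n) // A.card = m ∧ A.image σ = A} =
      ∑ l ∈ (Fintype.piFinset fun _ : Fin m => Finset.range (m + 1)).filter
          (fun l : Fin m → ℕ => ∑ j : Fin m, (j.1 + 1) * l j = m),
        ∏ j : Fin m, (cycleCount σ (j.1 + 1)).choose (l j) := by
  classical
  -- notation
  set Ω : ℕ → Finset (Finset (Fin n)) := fun j =>
    Finset.univ.filter (fun D => D.card = j ∧ σ.IsCycleOn ↑D) with hΩdef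
  have hcc : ∀ j, cycleCount σ j = (Ω j).card := by
    intro j
    rw [cycleCount, Nat.card_eq_fintype_card, Fintype.card_subtype]
  set T : Finset (Finset (Finset (Fin n))) :=
    Finset.univ.filter (fun S => (∀ D ∈ S, D.Nonempty ∧ σ.IsCycleOn ↑D) ∧
      ∑ D ∈ S, D.card = m) with hTdef
  set L : Finset (Fin m → ℕ) :=
    (Fintype.piFinset fun _ : Fin m => Finset.range (m + 1)).filter
      (fun l : Fin m → ℕ => ∑ j : Fin m, (j.1 + 1) * l j = m) with hLdef
  -- the union of all cycles contained in a fixed set A recovers A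
  have horbs : ∀ A : Finset (Fin n), A.image σ = A →
      (Finset.univ.filter fun D : Finset (Fin n) => (D.Nonempty ∧ σ.IsCycleOn ↑D) ∧ D ⊆ A).biUnion id = A := by
    intro A hA
    ext x
    simp only [Finset.mem_biUnion, Finset.mem_filter, Finset.mem_univ, true_and, id]
    constructor
    · rintro ⟨D, ⟨_, hDA⟩, hxD⟩; exact hDA hxD
    · intro hx
      exact ⟨CFAux.orb σ x, ⟨⟨⟨x, CFAux.self_mem_orb⟩, CFAux.isCycleOn_orb⟩,
        CFAux.orb_subset hA hx⟩, CFAux.self_mem_orb⟩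
  -- cardinality of a disjoint union of cycles
  have hsum_card : ∀ S : Finset (Finset (Fin n)), (∀ D ∈ S, σ.IsCycleOn ↑D) →
      (S.biUnion id).card = ∑ D ∈ S, D.card := by
    intro S hS
    exact Finset.card_biUnion fun D hD E hE hne =>
      CFAux.cycle_disjoint (hS D hD) (hS E hE) hne
  -- Step 1 : the fixed sets biject with the families of cycles in T
  have hstep1 : Nat.card {A : Finset (Fin n) // A.card = m ∧ A.image σ = A} = T.card := by
    rw [Nat.card_eq_fintype_card, Fintype.card_subtype]
    refine Finset.card_bij'
      (i := fun A _ => Finset.univ.filter fun D : Finset (Fin n) => (D.Nonempty ∧ σ.IsCycleOn ↑D) ∧ D ⊆ A)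
      (j := fun S _ => S.biUnion id) ?_ ?_ ?_ ?_
    · intro A hA
      obtain ⟨-, hAm, hAim⟩ := Finset.mem_filter.1 hA
      refine Finset.mem_filter.2 ⟨Finset.mem_univ _, fun D hD => (Finset.mem_filter.1 hD).2.1, ?_⟩
      rw [← hsum_card _ (fun D hD => (Finset.mem_filter.1 hD).2.1.2), horbs A hAim, hAm]
    · intro S hS
      obtain ⟨-, hcyc, hsum⟩ := Finset.mem_filter.1 hS
      refine Finset.mem_filter.2 ⟨Finset.mem_univ _, ?_, ?_⟩
      · rw [hsum_card _ (fun D hD => (hcyc D hD).2), hsum]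
      · show Finset.image σ (S.biUnion id) = S.biUnion id
        rw [Finset.biUnion_image]
        refine Finset.biUnion_congr rfl fun D hD => ?_
        simpa using CFAux.image_cycle_eq (hcyc D hD).2
    · intro A hA
      exact horbs A (Finset.mem_filter.1 hA).2.2
    · intro S hS
      obtain ⟨-, hcyc, hsum⟩ := Finset.mem_filter.1 hS
      ext D
      simp only [Finset.mem_filter, Finset.mem_univ, true_and]
      constructor
      · rintro ⟨⟨⟨x, hxD⟩, hDc⟩, hDsub⟩
        obtain ⟨E, hES, hxE⟩ := Finset.mem_biUnion.1 (hDsub hxD)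
        rw [CFAux.cycle_eq hDc (hcyc E hES).2 hxD hxE]
        exact hES
      · intro hD
        exact ⟨hcyc D hD, Finset.subset_biUnion_of_mem id hD⟩
  -- the profile map
  set p : Finset (Finset (Fin n)) → (Fin m → ℕ) :=
    fun S j => (S.filter fun D => D.card = j.1 + 1).card with hpdef
  -- decomposition of the sum of cards along the profile
  have hcalc : ∀ S : Finset (Finset (Fin n)), (∀ D ∈ S, ∃ j : Fin m, D.card = j.1 + 1) →
      ∑ D ∈ S, D.card = ∑ j : Fin m, (j.1 + 1) * p S j := by
    intro S hcards
    have hinj : ∀ a ∈ (Finset.univ : Finset (Fin m)), ∀ b ∈ Finset.univ,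
        a.1 + 1 = b.1 + 1 → a = b := by
      intro a _ b _ h
      exact Fin.ext (by omega)
    have hmaps : ∀ D ∈ S, D.card ∈ (Finset.univ : Finset (Fin m)).image fun j => j.1 + 1 := by
      intro D hD
      obtain ⟨j, hj⟩ := hcards D hD
      exact Finset.mem_image.2 ⟨j, Finset.mem_univ _, hj.symm⟩
    calc ∑ D ∈ S, D.card
        = ∑ c ∈ (Finset.univ : Finset (Fin m)).image (fun j => j.1 + 1),
            ∑ D ∈ S.filter fun D => D.card = c, D.card :=
          (Finset.sum_fiberwise_of_maps_to hmaps _).symm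
      _ = ∑ c ∈ (Finset.univ : Finset (Fin m)).image (fun j => j.1 + 1),
            c * (S.filter fun D => D.card = c).card := by
          refine Finset.sum_congr rfl fun c _ => ?_
          rw [Finset.sum_congr rfl fun D hD => (Finset.mem_filter.1 hD).2,
            Finset.sum_const, smul_eq_mul, mul_comm]
      _ = ∑ j : Fin m, (j.1 + 1) * p S j := Finset.sum_image hinj
  -- biUnion of profile fibers recovers S
  have hfib_union : ∀ S : Finset (Finset (Fin n)), (∀ D ∈ S, ∃ j : Fin m, D.card = j.1 + 1) →
      Finset.univ.biUnion (fun j : Fin m => S.filter fun D => D.card = j.1 + 1) = S := by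
    intro S hcards
    ext D
    simp only [Finset.mem_biUnion, Finset.mem_filter, Finset.mem_univ, true_and]
    constructor
    · rintro ⟨j, hD, -⟩; exact hD
    · intro hD
      obtain ⟨j, hj⟩ := hcards D hD
      exact ⟨j, hD, hj⟩
  -- fibers of a biUnion of card-homogeneous families
  have hfib_eq : ∀ F : Fin m → Finset (Finset (Fin n)),
      (∀ j, ∀ D ∈ F j, D.card = j.1 + 1) →
      ∀ j : Fin m, (Finset.univ.biUnion F).filter (fun D => D.card = j.1 + 1) = F j := by
    intro F hF j
    ext D
    simp only [Finset.mem_filter, Finset.mem_biUnion, Finset.mem_univ, true_and]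
    constructor
    · rintro ⟨⟨j', hD⟩, hcard⟩
      have := hF j' D hD
      have : j' = j := Fin.ext (by omega)
      exact this ▸ hD
    · intro hD
      exact ⟨⟨j, hD⟩, hF j D hD⟩
  -- every cycle in an S ∈ T has card between 1 and m
  have hcards_T : ∀ S, S ∈ T → ∀ D ∈ S, ∃ j : Fin m, D.card = j.1 + 1 := by
    intro S hS D hD
    obtain ⟨-, hcyc, hsum⟩ := Finset.mem_filter.1 hS
    have h1 : 1 ≤ D.card := Finset.card_pos.2 (hcyc D hD).1
    have h2 : D.card ≤ m := hsum ▸ Finset.single_le_sum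
      (f := fun D : Finset (Fin n) => D.card) (fun _ _ => Nat.zero_le _) hD
    refine ⟨⟨D.card - 1, by omega⟩, ?_⟩
    show D.card = D.card - 1 + 1
    omega
  -- Step 2 : profiles of elements of T lie in L
  have hpT : ∀ S ∈ T, p S ∈ L := by
    intro S hS
    have hsum2 : ∑ j : Fin m, (j.1 + 1) * p S j = m := by
      rw [← hcalc S (hcards_T S hS)]
      exact (Finset.mem_filter.1 hS).2.2
    refine Finset.mem_filter.2 ⟨Fintype.mem_piFinset.2 fun j => Finset.mem_range.2 ?_, hsum2⟩
    have hle : (j.1 + 1) * p S j ≤ m := by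
      calc (j.1 + 1) * p S j ≤ ∑ i : Fin m, (i.1 + 1) * p S i :=
            Finset.single_le_sum (f := fun i : Fin m => (i.1 + 1) * p S i)
              (fun _ _ => Nat.zero_le _) (Finset.mem_univ j)
        _ = m := hsum2
    have : p S j ≤ (j.1 + 1) * p S j := Nat.le_mul_of_pos_left _ (Nat.succ_pos _)
    omega
  -- Step 3 : each fiber of the profile map has the right cardinality
  have hstep3 : ∀ l ∈ L, (T.filter fun S => p S = l).card =
      ∏ j : Fin m, (cycleCount σ (j.1 + 1)).choose (l j) := by
    intro l hl
    obtain ⟨hlpi, hlsum⟩ := Finset.mem_filter.1 hl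
    have : ∏ j : Fin m, (cycleCount σ (j.1 + 1)).choose (l j) =
        (Fintype.piFinset fun j : Fin m => (Ω (j.1 + 1)).powersetCard (l j)).card := by
      rw [Fintype.card_piFinset]
      exact Finset.prod_congr rfl fun j _ => by
        rw [Finset.card_powersetCard, hcc]
    rw [this]
    refine Finset.card_bij'
      (i := fun S _ => fun j : Fin m => S.filter fun D => D.card = j.1 + 1)
      (j := fun F _ => Finset.univ.biUnion F) ?_ ?_ ?_ ?_
    · intro S hS
      obtain ⟨hST, hSp⟩ := Finset.mem_filter.1 hS
      obtain ⟨-, hcyc, -⟩ := Finset.mem_filter.1 hST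
      refine Fintype.mem_piFinset.2 fun j => Finset.mem_powersetCard.2 ⟨?_, ?_⟩
      · intro D hD
        obtain ⟨hDS, hDc⟩ := Finset.mem_filter.1 hD
        exact Finset.mem_filter.2 ⟨Finset.mem_univ _, hDc, (hcyc D hDS).2⟩
      · exact congrFun hSp j
    · intro F hF
      have hF' : ∀ j : Fin m, F j ⊆ Ω (j.1 + 1) ∧ (F j).card = l j := fun j =>
        Finset.mem_powersetCard.1 (Fintype.mem_piFinset.1 hF j)
      have hcards : ∀ j, ∀ D ∈ F j, D.card = j.1 + 1 := fun j D hD =>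
        (Finset.mem_filter.1 ((hF' j).1 hD)).2.1
      have hmem : ∀ D ∈ Finset.univ.biUnion F, ∃ j : Fin m, D.card = j.1 + 1 := by
        intro D hD
        obtain ⟨j, -, hDj⟩ := Finset.mem_biUnion.1 hD
        exact ⟨j, hcards j D hDj⟩
      have hprof : p (Finset.univ.biUnion F) = l := by
        funext j
        show (Finset.univ.biUnion F |>.filter fun D => D.card = j.1 + 1).card = l j
        rw [hfib_eq F hcards j]
        exact (hF' j).2
      refine Finset.mem_filter.2 ⟨Finset.mem_filter.2 ⟨Finset.mem_univ _, ?_, ?_⟩, hprof⟩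
      · intro D hD
        obtain ⟨j, -, hDj⟩ := Finset.mem_biUnion.1 hD
        have := Finset.mem_filter.1 ((hF' j).1 hDj)
        exact ⟨Finset.card_pos.1 (this.2.1 ▸ Nat.succ_pos j.1), this.2.2⟩
      · rw [hcalc _ hmem, hprof]
        exact hlsum
    · intro S hS
      exact hfib_union S (hcards_T S (Finset.mem_filter.1 hS).1)
    · intro F hF
      have hF' : ∀ j : Fin m, F j ⊆ Ω (j.1 + 1) ∧ (F j).card = l j := fun j =>
        Finset.mem_powersetCard.1 (Fintype.mem_piFinset.1 hF j)
      have hcards : ∀ j, ∀ D ∈ F j, D.card = j.1 + 1 := fun j D hD =>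
        (Finset.mem_filter.1 ((hF' j).1 hD)).2.1
      funext j
      exact hfib_eq F hcards j
  -- put everything together
  rw [hstep1, Finset.card_eq_sum_card_fiberwise hpT]
  exact Finset.sum_congr rfl fun l hl => hstep3 l hl
end

section
/- Let n ≥ km and let σ be a uniformly random permutation of [n]. Then the k-th moment of ℰ_m^{(n)}, the number of m-element subsets of [n] fixed setwise by σ, equals v_{k;m}, the number of m-covers of [k]. -/
open scoped BigOperators

noncomputable def numCovers (k m : ℕ) : ℕ :=
  Nat.card {C : Multiset (Finset (Fin k)) //
    (∀ s ∈ C, s ≠ ∅) ∧ ∀ i : Fin k, Multiset.countP (fun s => i ∈ s) C = m}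

noncomputable def setsFixed (n m : ℕ) (σ : Equiv.Perm (Fin n)) : ℕ :=
  Nat.card {A : Finset (Fin n) // A.card = m ∧ A.image σ = A}

/-! ### Auxiliary lemmas -/

section aux

lemma exists_comp_eq_of_card_fibers {α β : Type*} [Fintype α] [DecidableEq β] (f g : α → β)
    (h : ∀ b, Fintype.card {x // f x = b} = Fintype.card {x // g x = b}) :
    ∃ σ : Equiv.Perm α, ∀ x, f (σ x) = g x := by
  classical
  have e : ∀ b, {x // g x = b} ≃ {x // f x = b} := fun b => Fintype.equivOfCardEq (h b).symm
  refine ⟨(Equiv.sigmaFiberEquiv g).symm.trans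
    ((Equiv.sigmaCongrRight e).trans (Equiv.sigmaFiberEquiv f)), fun x => ?_⟩
  exact (e (g x) ⟨x, rfl⟩).2

lemma exists_fun_of_multiset_card {β : Type*} {n : ℕ} (M : Multiset β)
    (h : Multiset.card M = n) :
    ∃ f : Fin n → β, Multiset.map f Finset.univ.val = M := by
  obtain ⟨l, rfl⟩ : ∃ l : List β, (l : Multiset β) = M := ⟨M.toList, Multiset.coe_toList M⟩
  have hl : l.length = n := by simpa using h
  refine ⟨fun i => l.get (Fin.cast hl.symm i), ?_⟩
  have h1 : (Finset.univ.val : Multiset (Fin n)) = ↑(List.finRange n) := by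
    rw [Fin.univ_def]
  rw [h1, Multiset.map_coe]
  have h2 : List.map (fun i => l.get (Fin.cast hl.symm i)) (List.finRange n) = l := by
    rw [← List.ofFn_eq_map]
    apply List.ext_getElem
    · simp [hl]
    · intro i h1 h2
      simp [List.get_eq_getElem]
  rw [h2]

lemma image_perm_eq_iff {α : Type*} [DecidableEq α] (σ : Equiv.Perm α) (A : Finset α) :
    A.image σ = A ↔ ∀ x, σ x ∈ A ↔ x ∈ A := by
  constructor
  · intro h x
    constructor
    · intro hx
      rw [← h] at hx
      obtain ⟨y, hy, hxy⟩ := Finset.mem_image.1 hx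
      rwa [← σ.injective hxy]
    · intro hx
      rw [← h]
      exact Finset.mem_image_of_mem _ hx
  · intro h
    ext b
    rw [Finset.mem_image]
    constructor
    · rintro ⟨a, ha, rfl⟩; exact (h a).2 ha
    · intro hb
      exact ⟨σ⁻¹ b, (h (σ⁻¹ b)).1 (by simpa using hb), by simp⟩

end aux

/-! ### The space of signature functions and its `Perm` action -/

abbrev SigSp (n m k : ℕ) :=
  {sig : Fin n → Finset (Fin k) //
    ∀ i : Fin k, (Finset.univ.filter fun x => i ∈ sig x).card = m}

instance sigAction (n m k : ℕ) : MulAction (Equiv.Perm (Fin n)) (SigSp n m k) where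
  smul σ sig := ⟨fun x => sig.1 (σ⁻¹ x), by
    intro i
    have himg : (Finset.univ.filter fun x => i ∈ sig.1 (σ⁻¹ x))
        = (Finset.univ.filter fun x => i ∈ sig.1 x).image σ := by
      ext y
      simp only [Finset.mem_filter, Finset.mem_image, Finset.mem_univ, true_and]
      constructor
      · intro hy; exact ⟨σ⁻¹ y, hy, by simp⟩
      · rintro ⟨x, hx, rfl⟩; simpa using hx
    rw [himg, Finset.card_image_of_injective _ σ.injective, sig.2 i]⟩
  one_smul sig := by
    apply Subtype.ext
    funext x
    show sig.1 ((1 : Equiv.Perm (Fin n))⁻¹ x) = sig.1 x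
    simp
  mul_smul σ τ sig := Subtype.ext (funext fun x => by
    show sig.1 ((σ * τ)⁻¹ x) = sig.1 (τ⁻¹ (σ⁻¹ x))
    simp [mul_inv_rev])

lemma smul_sig_val {n m k : ℕ} (σ : Equiv.Perm (Fin n)) (sig : SigSp n m k) :
    (σ • sig).1 = fun x => sig.1 (σ⁻¹ x) := rfl

/-! ### Tuples of fixed m-sets correspond to fixed points of the action -/

def tupleEquiv (n m k : ℕ) (σ : Equiv.Perm (Fin n)) :
    {T : Fin k → Finset (Fin n) // ∀ i, (T i).card = m ∧ (T i).image σ = T i} ≃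
      MulAction.fixedBy (SigSp n m k) σ where
  toFun T := ⟨⟨fun x => Finset.univ.filter fun i => x ∈ T.1 i, by
      intro i
      have h : (Finset.univ.filter fun x =>
          i ∈ (Finset.univ.filter fun j => x ∈ T.1 j)) = T.1 i := by
        ext x; simp
      rw [h]; exact (T.2 i).1⟩, by
    refine MulAction.mem_fixedBy.2 (Subtype.ext (funext fun x => ?_))
    show (Finset.univ.filter fun i => (σ⁻¹ x : Fin n) ∈ T.1 i)
        = Finset.univ.filter fun i => x ∈ T.1 i
    ext i
    simp only [Finset.mem_filter, Finset.mem_univ, true_and]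
    have hiff := (image_perm_eq_iff σ (T.1 i)).1 (T.2 i).2
    rw [← hiff (σ⁻¹ x), Equiv.Perm.coe_inv, Equiv.apply_symm_apply]⟩
  invFun S := ⟨fun i => Finset.univ.filter fun x => i ∈ S.1.1 x, by
    intro i
    refine ⟨S.1.2 i, ?_⟩
    apply (image_perm_eq_iff σ _).2
    intro x
    have h := congrFun (congrArg Subtype.val S.2) (σ x)
    simp only [smul_sig_val, Equiv.Perm.coe_inv, Equiv.symm_apply_apply] at h
    simp only [Finset.mem_filter, Finset.mem_univ, true_and, ← h]⟩
  left_inv T := by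
    apply Subtype.ext; funext i
    ext x; simp
  right_inv S := by
    apply Subtype.ext; apply Subtype.ext; funext x
    ext i; simp

/-! ### The map to covers -/

def Phi (n m k : ℕ) (sig : SigSp n m k) :
    {C : Multiset (Finset (Fin k)) //
      (∀ s ∈ C, s ≠ ∅) ∧ ∀ i : Fin k, Multiset.countP (fun s => i ∈ s) C = m} := by
  classical
  refine ⟨(Multiset.map sig.1 Finset.univ.val).filter (· ≠ ∅),
    fun s hs => (Multiset.mem_filter.1 hs).2, fun i => ?_⟩
  have h1 : Multiset.countP (fun s => i ∈ s)
      ((Multiset.map sig.1 Finset.univ.val).filter (· ≠ ∅))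
      = Multiset.countP (fun s => i ∈ s) (Multiset.map sig.1 Finset.univ.val) := by
    rw [Multiset.countP_eq_card_filter, Multiset.filter_filter,
      Multiset.countP_eq_card_filter]
    congr 1
    apply Multiset.filter_congr
    intro s _
    have hiff : (i ∈ s ∧ s ≠ ∅) ↔ i ∈ s := ⟨And.left, fun h => ⟨h, Finset.ne_empty_of_mem h⟩⟩
    exact hiff
  rw [h1, Multiset.countP_map]
  have h2 : (Finset.univ.filter fun x => i ∈ sig.1 x).card
      = Multiset.card (Multiset.filter (fun a => i ∈ sig.1 a) Finset.univ.val) := by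
    rw [Finset.card, Finset.filter_val]
  have := sig.2 i
  rw [h2] at this
  exact this

lemma Phi_smul (n m k : ℕ) (σ : Equiv.Perm (Fin n)) (sig : SigSp n m k) :
    Phi n m k (σ • sig) = Phi n m k sig := by
  apply Subtype.ext
  show (Multiset.map (fun x => sig.1 (σ⁻¹ x)) Finset.univ.val).filter (· ≠ ∅)
      = (Multiset.map sig.1 Finset.univ.val).filter (· ≠ ∅)
  have h2 : Multiset.map (⇑σ⁻¹) Finset.univ.val = Finset.univ.val := by
    have h := Finset.map_univ_equiv (σ⁻¹ : Equiv.Perm (Fin n))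
    calc Multiset.map (⇑σ⁻¹) Finset.univ.val
        = (Finset.map (σ⁻¹ : Equiv.Perm (Fin n)).toEmbedding Finset.univ).val := by
          rw [Finset.map_val]; rfl
      _ = Finset.univ.val := by rw [h]
  have h3 : Multiset.map (fun x => sig.1 (σ⁻¹ x)) Finset.univ.val
      = Multiset.map sig.1 Finset.univ.val := by
    conv_rhs => rw [← h2]
    rw [Multiset.map_map]
    rfl
  rw [h3]

lemma Phi_inj (n m k : ℕ) (sig₁ sig₂ : SigSp n m k)
    (h : Phi n m k sig₁ = Phi n m k sig₂) :
    ∃ σ : Equiv.Perm (Fin n), σ • sig₂ = sig₁ := by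
  classical
  have hfe : (Multiset.map sig₁.1 Finset.univ.val).filter (· ≠ ∅)
      = (Multiset.map sig₂.1 Finset.univ.val).filter (· ≠ ∅) := congrArg Subtype.val h
  set M₁ := Multiset.map sig₁.1 Finset.univ.val with hM₁
  set M₂ := Multiset.map sig₂.1 Finset.univ.val with hM₂
  have hcard : Multiset.card M₁ = Multiset.card M₂ := by
    simp [hM₁, hM₂]
  have hM : M₁ = M₂ := by
    ext b
    by_cases hb : b = (∅ : Finset (Fin k))
    · subst hb
      -- count of ∅ is determined by total card and the filtered part
      have key : ∀ (M : Multiset (Finset (Fin k))),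
          Multiset.count ∅ M + Multiset.card (M.filter (· ≠ ∅)) = Multiset.card M := by
        intro M
        have hsplit := Multiset.filter_add_not (fun s => s ≠ (∅ : Finset (Fin k))) M
        have hc : Multiset.card (M.filter (· ≠ ∅))
            + Multiset.card (M.filter fun s => ¬ s ≠ ∅) = Multiset.card M := by
          rw [← Multiset.card_add, hsplit]
        have hcount : Multiset.count ∅ M = Multiset.card (M.filter fun s => ¬ s ≠ ∅) := by
          rw [Multiset.count_eq_card_filter_eq]
          congr 1
          apply Multiset.filter_congr
          intro s _
          simp [eq_comm]
        omega
      have k1 := key M₁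
      have k2 := key M₂
      rw [hfe, hcard] at k1
      omega
    · have c1 : Multiset.count b (M₁.filter (· ≠ ∅)) = Multiset.count b M₁ := by
        rw [Multiset.count_filter, if_pos hb]
      have c2 : Multiset.count b (M₂.filter (· ≠ ∅)) = Multiset.count b M₂ := by
        rw [Multiset.count_filter, if_pos hb]
      rw [← c1, ← c2, hfe]
  have hfib : ∀ b, Fintype.card {x // sig₁.1 x = b} = Fintype.card {x // sig₂.1 x = b} := by
    intro b
    have key : ∀ (f : Fin n → Finset (Fin k)),
        Fintype.card {x // f x = b} = Multiset.count b (Multiset.map f Finset.univ.val) := by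
      intro f
      rw [Fintype.card_subtype, Multiset.count_map, Finset.card, Finset.filter_val]
      congr 1
      apply Multiset.filter_congr
      intro x _
      simp [eq_comm]
    rw [key sig₁.1, key sig₂.1, ← hM₁, ← hM₂, hM]
  obtain ⟨σ, hσ⟩ := exists_comp_eq_of_card_fibers sig₁.1 sig₂.1 hfib
  refine ⟨σ, Subtype.ext (funext fun x => ?_)⟩
  show sig₂.1 (σ⁻¹ x) = sig₁.1 x
  have h5 := hσ (σ⁻¹ x)
  rw [Equiv.Perm.coe_inv, Equiv.apply_symm_apply] at h5
  exact h5.symm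

lemma sum_card_eq_sum_countP (k : ℕ) (D : Multiset (Finset (Fin k))) :
    (Multiset.map Finset.card D).sum = ∑ i : Fin k, Multiset.countP (fun s => i ∈ s) D := by
  induction D using Multiset.induction with
  | empty => simp
  | cons a D ih =>
    simp only [Multiset.map_cons, Multiset.sum_cons, Multiset.countP_cons,
      Finset.sum_add_distrib, ih]
    have h : (∑ i : Fin k, if i ∈ a then 1 else 0) = a.card := by
      rw [Finset.sum_boole]
      norm_cast
      rw [Finset.filter_univ_mem]
    omega

lemma card_le_sum_card (k : ℕ) (D : Multiset (Finset (Fin k))) (hD : ∀ s ∈ D, s ≠ ∅) :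
    Multiset.card D ≤ (Multiset.map Finset.card D).sum := by
  induction D using Multiset.induction with
  | empty => simp
  | cons a D ih =>
    simp only [Multiset.card_cons, Multiset.map_cons, Multiset.sum_cons]
    have ha : 1 ≤ a.card := by
      rcases Finset.eq_empty_or_nonempty a with h | h
      · exact absurd h (hD a (Multiset.mem_cons_self a D))
      · exact Finset.card_pos.2 h
    have h2 := ih (fun s hs => hD s (Multiset.mem_cons_of_mem hs))
    omega

lemma Phi_surj (n m k : ℕ) (hn : k * m ≤ n) :
    Function.Surjective (Phi n m k) := by
  classical
  rintro ⟨C, hC1, hC2⟩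
  have hsum' : (Multiset.map Finset.card C).sum = k * m := by
    rw [sum_card_eq_sum_countP]
    simp only [hC2]
    simp [Finset.sum_const, mul_comm]
  have hle := card_le_sum_card k C hC1
  have hcard : Multiset.card C ≤ n := by
    rw [hsum'] at hle; omega
  set M := C + Multiset.replicate (n - Multiset.card C) (∅ : Finset (Fin k)) with hMdef
  have hMcard : Multiset.card M = n := by
    simp only [hMdef, Multiset.card_add, Multiset.card_replicate]
    omega
  obtain ⟨f, hf⟩ := exists_fun_of_multiset_card M hMcard
  have hrep : ∀ (p : Finset (Fin k) → Prop) [DecidablePred p], ¬ p ∅ →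
      Multiset.countP p (Multiset.replicate (n - Multiset.card C) (∅ : Finset (Fin k))) = 0 := by
    intro p _ hp
    rw [Multiset.countP_eq_zero]
    intro a ha
    rw [Multiset.eq_of_mem_replicate ha]
    exact hp
  have hconstraint : ∀ i : Fin k, (Finset.univ.filter fun x => i ∈ f x).card = m := by
    intro i
    have h2 : (Finset.univ.filter fun x => i ∈ f x).card
        = Multiset.countP (fun s => i ∈ s) M := by
      rw [← hf, Multiset.countP_map, Finset.card, Finset.filter_val]
    rw [h2, hMdef, Multiset.countP_add, hC2 i, hrep _ (by simp), add_zero]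
  refine ⟨⟨f, hconstraint⟩, Subtype.ext ?_⟩
  show (Multiset.map f Finset.univ.val).filter (· ≠ ∅) = C
  rw [hf, hMdef, Multiset.filter_add]
  have h3 : Multiset.filter (· ≠ ∅) C = C := Multiset.filter_eq_self.2 hC1
  have h4 : Multiset.filter (· ≠ ∅)
      (Multiset.replicate (n - Multiset.card C) (∅ : Finset (Fin k))) = 0 := by
    rw [Multiset.filter_eq_nil]
    intro a ha
    rw [Multiset.eq_of_mem_replicate ha]
    simp
  rw [h3, h4, add_zero]

lemma card_quot (n m k : ℕ) (hn : k * m ≤ n) :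
    Nat.card (Quotient (MulAction.orbitRel (Equiv.Perm (Fin n)) (SigSp n m k)))
      = numCovers k m := by
  classical
  have hlift : ∀ (a b : SigSp n m k), MulAction.orbitRel (Equiv.Perm (Fin n)) (SigSp n m k) a b →
      Phi n m k a = Phi n m k b := by
    intro a b hab
    obtain ⟨g, hg⟩ := MulAction.mem_orbit_iff.1 (MulAction.orbitRel_apply.1 hab)
    rw [← hg, Phi_smul]
  refine Nat.card_eq_of_bijective (Quotient.lift (Phi n m k) hlift) ⟨?_, ?_⟩
  · intro x y
    induction x using Quotient.ind
    induction y using Quotient.ind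
    rename_i a b
    intro hab
    have : Phi n m k a = Phi n m k b := hab
    obtain ⟨σ, hσ⟩ := Phi_inj n m k a b this
    exact Quotient.sound (MulAction.orbitRel_apply.2 (MulAction.mem_orbit_iff.2 ⟨σ, hσ⟩))
  · intro c
    obtain ⟨sig, hsig⟩ := Phi_surj n m k hn c
    exact ⟨⟦sig⟧, hsig⟩

/-- The k-th moment of the number of setwise-fixed m-sets of a uniform permutation
of [n], n ≥ km, equals the number of m-covers of [k]. -/
theorem moment_setsFixed (n m k : ℕ) (hn : k * m ≤ n) :
    (∑ σ : Equiv.Perm (Fin n), (setsFixed n m σ : ℝ) ^ k) / n.factorial =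
      numCovers k m := by
  classical
  letI fixInst : ∀ σ : Equiv.Perm (Fin n), Fintype (MulAction.fixedBy (SigSp n m k) σ) :=
    fun _ => Fintype.ofFinite _
  letI quotInst : Fintype (Quotient (MulAction.orbitRel (Equiv.Perm (Fin n)) (SigSp n m k))) :=
    Fintype.ofFinite _
  have hpow : ∀ σ : Equiv.Perm (Fin n),
      setsFixed n m σ ^ k = Fintype.card (MulAction.fixedBy (SigSp n m k) σ) := by
    intro σ
    have h1 : setsFixed n m σ
        = Fintype.card {A : Finset (Fin n) // A.card = m ∧ A.image σ = A} :=
      Nat.card_eq_fintype_card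
    rw [h1]
    have h2 : Fintype.card {A : Finset (Fin n) // A.card = m ∧ A.image σ = A} ^ k
        = Fintype.card (Fin k → {A : Finset (Fin n) // A.card = m ∧ A.image σ = A}) := by
      rw [Fintype.card_fun, Fintype.card_fin]
    rw [h2]
    exact Fintype.card_congr ((Equiv.subtypePiEquivPi).symm.trans (tupleEquiv n m k σ))
  have hb := MulAction.sum_card_fixedBy_eq_card_orbits_mul_card_group
    (Equiv.Perm (Fin n)) (SigSp n m k)
  have hq : Fintype.card (Quotient (MulAction.orbitRel (Equiv.Perm (Fin n)) (SigSp n m k)))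
      = numCovers k m := by
    rw [← Nat.card_eq_fintype_card]
    exact card_quot n m k hn
  have hsum : ∑ σ : Equiv.Perm (Fin n), setsFixed n m σ ^ k
      = numCovers k m * n.factorial := by
    calc ∑ σ : Equiv.Perm (Fin n), setsFixed n m σ ^ k
        = ∑ σ : Equiv.Perm (Fin n), Fintype.card (MulAction.fixedBy (SigSp n m k) σ) :=
          Finset.sum_congr rfl (fun σ _ => hpow σ)
      _ = Fintype.card (Quotient (MulAction.orbitRel (Equiv.Perm (Fin n)) (SigSp n m k)))
          * Fintype.card (Equiv.Perm (Fin n)) := hb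
      _ = numCovers k m * n.factorial := by
          rw [hq, Fintype.card_perm, Fintype.card_fin]
  have hcast : (∑ σ : Equiv.Perm (Fin n), (setsFixed n m σ : ℝ) ^ k)
      = (numCovers k m : ℝ) * n.factorial := by
    have : (∑ σ : Equiv.Perm (Fin n), (setsFixed n m σ : ℝ) ^ k)
        = ((∑ σ : Equiv.Perm (Fin n), setsFixed n m σ ^ k : ℕ) : ℝ) := by
      push_cast
      rfl
    rw [this, hsum]
    push_cast
    ring
  rw [hcast]
  have hfac : (n.factorial : ℝ) ≠ 0 := Nat.cast_ne_zero.2 (Nat.factorial_ne_zero n)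
  field_simp
end

section
/- Let n ≥ 2m and σ a uniformly random permutation of [n]. Then E[(ℰ_m^{(n)})²] = m + 1, and hence Var(ℰ_m^{(n)}) = m. -/
attribute [-instance] Finset.Subtype.fintype Finset.fintypeCoeSort

open scoped BigOperators
open Finset Equiv

variable {α : Type*} [DecidableEq α]

lemma image_eq_self_iff (σ : Equiv.Perm α) (B : Finset α) :
    B.image σ = B ↔ ∀ x, σ x ∈ B ↔ x ∈ B := by
  constructor
  · intro h x
    constructor
    · intro hx
      rw [← h] at hx
      obtain ⟨y, hy, hyx⟩ := Finset.mem_image.1 hx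
      rwa [← σ.injective hyx]
    · intro hx; rw [← h]; exact Finset.mem_image_of_mem _ hx
  · intro h
    ext y
    simp only [Finset.mem_image]
    constructor
    · rintro ⟨x, hx, rfl⟩; exact (h x).2 hx
    · intro hy; exact ⟨σ.symm y, (h _).1 (by simp [hy]), by simp⟩

section FixCount

variable [Fintype α]

lemma subtypeCongr_prop' {p : α → Prop} [DecidablePred p]
    (τ : Equiv.Perm {x // p x}) (ρ : Equiv.Perm {x // ¬ p x}) (x : α) :
    p (Equiv.Perm.subtypeCongr τ ρ x) ↔ p x := by
  by_cases h : p x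
  · rw [Equiv.Perm.subtypeCongr.left_apply _ _ h]
    simpa [h] using (τ ⟨x, h⟩).2
  · rw [Equiv.Perm.subtypeCongr.right_apply _ _ h]
    simpa [h] using (ρ ⟨x, h⟩).2

lemma filter_fixing_eq_image (p : α → Prop) [DecidablePred p] (A : Finset α)
    (hA : ∀ x, x ∈ A ↔ p x) :
    Finset.univ.filter (fun σ : Equiv.Perm α => A.image σ = A) =
      Finset.univ.image (fun τρ : Equiv.Perm {x // p x} × Equiv.Perm {x // ¬ p x} =>
        Equiv.Perm.subtypeCongr τρ.1 τρ.2) := by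
  ext σ
  simp only [Finset.mem_filter, Finset.mem_univ, true_and, Finset.mem_image]
  constructor
  · intro h
    have hiff : ∀ x, p (σ x) ↔ p x := fun x => by
      rw [← hA, ← hA]; exact (image_eq_self_iff σ A).1 h x
    refine ⟨(σ.subtypePerm fun x => hiff x,
      σ.subtypePerm fun x => not_congr (hiff x)), ?_⟩
    ext x
    by_cases hx : p x
    · rw [Equiv.Perm.subtypeCongr.left_apply _ _ hx]; rfl
    · rw [Equiv.Perm.subtypeCongr.right_apply _ _ hx]; rfl
  · rintro ⟨⟨τ, ρ⟩, rfl⟩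
    rw [image_eq_self_iff]
    intro x
    rw [hA, hA]
    exact subtypeCongr_prop' τ ρ x

lemma card_fixing (A : Finset α) :
    (Finset.univ.filter (fun σ : Equiv.Perm α => A.image σ = A)).card =
      A.card.factorial * (Fintype.card α - A.card).factorial := by
  have hinj : Function.Injective
      (fun τρ : Equiv.Perm {x // x ∈ A} × Equiv.Perm {x // ¬ x ∈ A} =>
        Equiv.Perm.subtypeCongr τρ.1 τρ.2) :=
    fun x y h => Equiv.Perm.subtypeCongrHom_injective (fun x => x ∈ A) h
  rw [filter_fixing_eq_image (fun x => x ∈ A) A fun _ => Iff.rfl,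
    Finset.card_image_of_injective _ hinj, Finset.card_univ, Fintype.card_prod,
    Fintype.card_perm, Fintype.card_perm,
    Fintype.card_of_subtype A fun _ => Iff.rfl,
    Fintype.card_of_subtype Aᶜ (fun x => by simp), Finset.card_compl]

/-- First moment: summed over all permutations, the number of fixed `r`-sets is `n!`. -/
lemma sum_fcount (r : ℕ) (hr : r ≤ Fintype.card α) :
    ∑ σ : Equiv.Perm α,
      (Finset.univ.filter (fun B : Finset α => B.card = r ∧ B.image σ = B)).card =
      (Fintype.card α).factorial := by
  have h1 : ∀ σ : Equiv.Perm α,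
      (Finset.univ.filter (fun B : Finset α => B.card = r ∧ B.image σ = B)).card =
      ∑ B : Finset α, if B.card = r ∧ B.image σ = B then 1 else 0 := by
    intro σ; rw [Finset.card_filter]
  simp only [h1]
  rw [Finset.sum_comm]
  have step : ∀ B : Finset α,
      (∑ σ : Equiv.Perm α, if B.card = r ∧ B.image σ = B then 1 else 0) =
      if B.card = r then r.factorial * (Fintype.card α - r).factorial else 0 := by
    intro B
    by_cases hB : B.card = r
    · simp only [hB, true_and, if_true]
      rw [← Finset.card_filter, card_fixing, hB]
    · simp [hB]
  simp only [step]
  rw [← Finset.sum_filter, Finset.sum_const, smul_eq_mul]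
  have hcard : (Finset.univ.filter (fun B : Finset α => B.card = r)).card =
      (Fintype.card α).choose r := by
    rw [← Finset.powerset_univ, ← Finset.powersetCard_eq_filter, Finset.card_powersetCard,
      Finset.card_univ]
  rw [hcard, ← mul_assoc, Nat.choose_mul_factorial_mul_factorial hr]

end FixCount

section Split

variable {p : α → Prop} [DecidablePred p]

lemma mem_map_subtype_iff (C : Finset {x // p x}) {x : α} (hx : p x) :
    x ∈ C.map (Function.Embedding.subtype p) ↔ ⟨x, hx⟩ ∈ C := by
  simp only [Finset.mem_map, Function.Embedding.coe_subtype]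
  constructor
  · rintro ⟨a, ha, rfl⟩; simpa using ha
  · intro h; exact ⟨⟨x, hx⟩, h, rfl⟩

lemma subtypeCongr_prop (τ : Equiv.Perm {x // p x}) (ρ : Equiv.Perm {x // ¬ p x}) (x : α) :
    p (Equiv.Perm.subtypeCongr τ ρ x) ↔ p x := by
  by_cases h : p x
  · rw [Equiv.Perm.subtypeCongr.left_apply _ _ h]
    simpa [h] using (τ ⟨x, h⟩).2
  · rw [Equiv.Perm.subtypeCongr.right_apply _ _ h]
    simpa [h] using (ρ ⟨x, h⟩).2

lemma fcount_subtypeCongr [Fintype α] (τ : Equiv.Perm {x // p x}) (ρ : Equiv.Perm {x // ¬ p x})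
    (m : ℕ) :
    (Finset.univ.filter (fun B : Finset α =>
        B.card = m ∧ B.image (Equiv.Perm.subtypeCongr τ ρ) = B)).card =
      ∑ k ∈ Finset.range (m + 1),
        (Finset.univ.filter (fun C : Finset {x // p x} => C.card = k ∧ C.image τ = C)).card *
        (Finset.univ.filter (fun D : Finset {x // ¬ p x} =>
          D.card = m - k ∧ D.image ρ = D)).card := by
  classical
  set σ := Equiv.Perm.subtypeCongr τ ρ with hσ
  have hp : ∀ x, p (σ x) ↔ p x := subtypeCongr_prop τ ρ
  have hleft : ∀ x (hx : p x), σ x = ↑(τ ⟨x, hx⟩) := fun x hx =>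
    Equiv.Perm.subtypeCongr.left_apply _ _ hx
  have hright : ∀ x (hx : ¬ p x), σ x = ↑(ρ ⟨x, hx⟩) := fun x hx =>
    Equiv.Perm.subtypeCongr.right_apply _ _ hx
  simp only [← Finset.card_product]
  rw [← Finset.card_sigma]
  apply Finset.card_nbij'
    (i := fun B => ⟨(B.filter p).card, (B.subtype p, B.subtype fun x => ¬ p x)⟩)
    (j := fun x => (x.2.1.map (Function.Embedding.subtype p)) ∪
      (x.2.2.map (Function.Embedding.subtype _)))
  · intro B hB
    rw [Finset.mem_coe, Finset.mem_filter] at hB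
    obtain ⟨-, hBm, hBfix⟩ := hB
    have hBiff := (image_eq_self_iff σ B).1 hBfix
    rw [Finset.mem_coe, Finset.mem_sigma]
    dsimp only
    constructor
    · rw [Finset.mem_range]
      have := Finset.card_filter_le B p
      omega
    · rw [Finset.mem_product]
      constructor
      · rw [Finset.mem_filter]
        refine ⟨Finset.mem_univ _, Finset.card_subtype _ _, ?_⟩
        rw [image_eq_self_iff]
        rintro ⟨x, hx⟩
        simp only [Finset.mem_subtype]
        have : (↑(τ ⟨x, hx⟩) : α) = σ x := (hleft x hx).symm
        rw [this]
        exact hBiff x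
      · rw [Finset.mem_filter]
        refine ⟨Finset.mem_univ _, ?_, ?_⟩
        · rw [Finset.card_subtype]
          have := Finset.card_filter_add_card_filter_not (s := B) (p := p)
          omega
        · rw [image_eq_self_iff]
          rintro ⟨x, hx⟩
          simp only [Finset.mem_subtype]
          have : (↑(ρ ⟨x, hx⟩) : α) = σ x := (hright x hx).symm
          rw [this]
          exact hBiff x
  · rintro ⟨k, C, D⟩ hx
    rw [Finset.mem_coe, Finset.mem_sigma, Finset.mem_range, Finset.mem_product, Finset.mem_filter,
      Finset.mem_filter] at hx
    obtain ⟨hk, ⟨-, hCk, hCfix⟩, ⟨-, hDk, hDfix⟩⟩ := hx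
    have hdisj : Disjoint (C.map (Function.Embedding.subtype p))
        (D.map (Function.Embedding.subtype fun x => ¬ p x)) := by
      rw [Finset.disjoint_left]
      intro a ha ha'
      exact Finset.property_of_mem_map_subtype D ha' (Finset.property_of_mem_map_subtype C ha)
    rw [Finset.mem_coe, Finset.mem_filter]
    refine ⟨Finset.mem_univ _, ?_, ?_⟩
    · rw [Finset.card_union_of_disjoint hdisj, Finset.card_map, Finset.card_map, hCk, hDk]
      omega
    · rw [image_eq_self_iff]
      intro x
      by_cases hxp : p x
      · have h1 : ∀ y (hy : p y), (y ∈ C.map (Function.Embedding.subtype p) ∪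
            D.map (Function.Embedding.subtype fun x => ¬ p x)) ↔ ⟨y, hy⟩ ∈ C := by
          intro y hy
          rw [Finset.mem_union, mem_map_subtype_iff C hy]
          simp only [or_iff_left_iff_imp]
          intro hmem
          exact absurd hy (Finset.property_of_mem_map_subtype D hmem)
        rw [h1 x hxp, h1 (σ x) ((hp x).2 hxp)]
        have : (⟨σ x, (hp x).2 hxp⟩ : {x // p x}) = τ ⟨x, hxp⟩ :=
          Subtype.ext (hleft x hxp)
        rw [this]
        exact (image_eq_self_iff τ C).1 hCfix _
      · have h1 : ∀ y (hy : ¬ p y), (y ∈ C.map (Function.Embedding.subtype p) ∪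
            D.map (Function.Embedding.subtype fun x => ¬ p x)) ↔ ⟨y, hy⟩ ∈ D := by
          intro y hy
          rw [Finset.mem_union, mem_map_subtype_iff D hy]
          simp only [or_iff_right_iff_imp]
          intro hmem
          exact absurd (Finset.property_of_mem_map_subtype C hmem) hy
        rw [h1 x hxp, h1 (σ x) (fun h => hxp ((hp x).1 h))]
        have : (⟨σ x, fun h => hxp ((hp x).1 h)⟩ : {x // ¬ p x}) = ρ ⟨x, hxp⟩ :=
          Subtype.ext (hright x hxp)
        rw [this]
        exact (image_eq_self_iff ρ D).1 hDfix _
  · intro B hB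
    simp only
    rw [Finset.subtype_map, Finset.subtype_map, Finset.filter_union_filter_not_eq]
  · rintro ⟨k, C, D⟩ hx
    rw [Finset.mem_coe, Finset.mem_sigma, Finset.mem_range, Finset.mem_product, Finset.mem_filter,
      Finset.mem_filter] at hx
    obtain ⟨hk, ⟨-, hCk, -⟩, ⟨-, hDk, -⟩⟩ := hx
    have hC : (C.map (Function.Embedding.subtype p) ∪
        D.map (Function.Embedding.subtype fun x => ¬ p x)).subtype p = C := by
      ext c
      rw [Finset.mem_subtype, Finset.mem_union, mem_map_subtype_iff C c.2]
      simp only [Subtype.coe_eta, or_iff_left_iff_imp]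
      intro hmem
      exact absurd c.2 (Finset.property_of_mem_map_subtype D hmem)
    have hD : (C.map (Function.Embedding.subtype p) ∪
        D.map (Function.Embedding.subtype fun x => ¬ p x)).subtype (fun x => ¬ p x) = D := by
      ext d
      rw [Finset.mem_subtype, Finset.mem_union, mem_map_subtype_iff D d.2]
      simp only [Subtype.coe_eta, or_iff_right_iff_imp]
      intro hmem
      exact absurd (Finset.property_of_mem_map_subtype C hmem) d.2
    have hk' : ((C.map (Function.Embedding.subtype p) ∪
        D.map (Function.Embedding.subtype fun x => ¬ p x)).filter p).card = k := by
      rw [← Finset.card_subtype, hC, hCk]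
    simp only
    rw [hC, hD, hk']

end Split

section Second

variable [Fintype α]

lemma sum_over_fixing (A : Finset α) (m : ℕ) (hA : A.card = m)
    (hn : 2 * m ≤ Fintype.card α) :
    ∑ σ ∈ Finset.univ.filter (fun σ : Equiv.Perm α => A.image σ = A),
      (Finset.univ.filter (fun B : Finset α => B.card = m ∧ B.image σ = B)).card =
    (m + 1) * (m.factorial * (Fintype.card α - m).factorial) := by
  have hinj : ∀ x ∈ (Finset.univ :
      Finset (Equiv.Perm {x // x ∈ A} × Equiv.Perm {x // ¬ x ∈ A})), ∀ y ∈ Finset.univ,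
      (fun τρ : Equiv.Perm {x // x ∈ A} × Equiv.Perm {x // ¬ x ∈ A} =>
        Equiv.Perm.subtypeCongr τρ.1 τρ.2) x =
      (fun τρ : Equiv.Perm {x // x ∈ A} × Equiv.Perm {x // ¬ x ∈ A} =>
        Equiv.Perm.subtypeCongr τρ.1 τρ.2) y → x = y :=
    fun x _ y _ h => Equiv.Perm.subtypeCongrHom_injective (fun x => x ∈ A) h
  rw [filter_fixing_eq_image (fun x => x ∈ A) A fun _ => Iff.rfl]
  rw [Finset.sum_image hinj]
  simp only [fcount_subtypeCongr]
  rw [Finset.sum_comm]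
  rw [show (m + 1) * (m.factorial * (Fintype.card α - m).factorial)
      = ∑ _k ∈ Finset.range (m + 1), m.factorial * (Fintype.card α - m).factorial by
    rw [Finset.sum_const, Finset.card_range, smul_eq_mul]]
  refine Finset.sum_congr rfl fun k hk => ?_
  rw [Finset.mem_range] at hk
  rw [Fintype.sum_prod_type]
  dsimp only
  refine (Finset.sum_mul_sum (f := fun x : Equiv.Perm {x // x ∈ A} => #{C : Finset {x // x ∈ A} | #C = k ∧ Finset.image x C = C})
    (g := fun y : Equiv.Perm {x // x ∉ A} => #{D : Finset {x // x ∉ A} | #D = m - k ∧ Finset.image y D = D})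
    Finset.univ Finset.univ).symm.trans ?_
  rw [sum_fcount k (by
      rw [Fintype.card_of_subtype A fun _ => Iff.rfl, hA]; omega),
    sum_fcount (m - k) (by
      rw [Fintype.card_of_subtype Aᶜ fun x => by simp, Finset.card_compl, hA]; omega)]
  rw [Fintype.card_of_subtype A fun _ => Iff.rfl,
    Fintype.card_of_subtype Aᶜ fun x => by simp, Finset.card_compl, hA]

end Second

set_option maxHeartbeats 1600000 in
theorem second_moment_and_var_setsFixed (n m : ℕ) (hn : 2 * m ≤ n) :
    (∑ σ : Equiv.Perm (Fin n), (setsFixed n m σ : ℝ) ^ 2) / n.factorial = m + 1 ∧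
    (∑ σ : Equiv.Perm (Fin n), (setsFixed n m σ : ℝ) ^ 2) / n.factorial -
        ((∑ σ : Equiv.Perm (Fin n), (setsFixed n m σ : ℝ)) / n.factorial) ^ 2 = m := by
  classical
  have hm : m ≤ n := by omega
  have hsf : ∀ σ : Equiv.Perm (Fin n), setsFixed n m σ =
      (Finset.univ.filter (fun B : Finset (Fin n) => B.card = m ∧ B.image σ = B)).card := by
    intro σ
    rw [setsFixed, Nat.card_eq_fintype_card, Fintype.card_subtype]
  -- first moment
  have hfirst : ∑ σ : Equiv.Perm (Fin n), setsFixed n m σ = n.factorial := by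
    simp only [hsf]
    have := sum_fcount (α := Fin n) m (by simpa using hm)
    simpa using this
  -- second moment
  have hsecond : ∑ σ : Equiv.Perm (Fin n), setsFixed n m σ * setsFixed n m σ =
      (m + 1) * n.factorial := by
    simp only [hsf]
    have expand : ∀ σ : Equiv.Perm (Fin n),
        (Finset.univ.filter (fun B : Finset (Fin n) => B.card = m ∧ B.image σ = B)).card *
        (Finset.univ.filter (fun B : Finset (Fin n) => B.card = m ∧ B.image σ = B)).card =
        ∑ A ∈ Finset.univ.filter (fun A : Finset (Fin n) => A.card = m ∧ A.image σ = A),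
          (Finset.univ.filter (fun B : Finset (Fin n) => B.card = m ∧ B.image σ = B)).card := by
      intro σ; rw [Finset.sum_const, smul_eq_mul]
    simp only [expand]
    have h2 : ∀ σ : Equiv.Perm (Fin n),
        (∑ A ∈ Finset.univ.filter (fun A : Finset (Fin n) => A.card = m ∧ A.image σ = A),
          (Finset.univ.filter (fun B : Finset (Fin n) => B.card = m ∧ B.image σ = B)).card) =
        ∑ A : Finset (Fin n), if A.card = m ∧ A.image σ = A then
          (Finset.univ.filter (fun B : Finset (Fin n) => B.card = m ∧ B.image σ = B)).card
          else 0 := by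
      intro σ; rw [Finset.sum_filter]
    simp only [h2]
    rw [Finset.sum_comm]
    have h3 : ∀ A : Finset (Fin n),
        (∑ σ : Equiv.Perm (Fin n), if A.card = m ∧ A.image σ = A then
          (Finset.univ.filter (fun B : Finset (Fin n) => B.card = m ∧ B.image σ = B)).card
          else 0) =
        if A.card = m then (m + 1) * (m.factorial * (n - m).factorial) else 0 := by
      intro A
      by_cases hA : A.card = m
      · simp only [hA, true_and, if_true]
        rw [← Finset.sum_filter]
        have := sum_over_fixing (α := Fin n) A m hA (by simpa using hn)
        simpa using this
      · simp [hA]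
    simp only [h3]
    rw [← Finset.sum_filter, Finset.sum_const, smul_eq_mul]
    have hcard : (Finset.univ.filter (fun B : Finset (Fin n) => B.card = m)).card =
        n.choose m := by
      rw [← Finset.powerset_univ, ← Finset.powersetCard_eq_filter, Finset.card_powersetCard,
        Finset.card_univ, Fintype.card_fin]
    rw [hcard]
    calc n.choose m * ((m + 1) * (m.factorial * (n - m).factorial))
        = (m + 1) * (n.choose m * m.factorial * (n - m).factorial) := by ring
      _ = (m + 1) * n.factorial := by rw [Nat.choose_mul_factorial_mul_factorial hm]
  have hfpos : (0 : ℝ) < (n.factorial : ℝ) := by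
    exact_mod_cast n.factorial_pos
  have hfne : (n.factorial : ℝ) ≠ 0 := ne_of_gt hfpos
  have E1 : (∑ σ : Equiv.Perm (Fin n), (setsFixed n m σ : ℝ)) = (n.factorial : ℝ) := by
    rw [← Nat.cast_sum, hfirst]
  have E2 : (∑ σ : Equiv.Perm (Fin n), (setsFixed n m σ : ℝ) ^ 2) =
      ((m : ℝ) + 1) * (n.factorial : ℝ) := by
    have : ∀ σ : Equiv.Perm (Fin n), (setsFixed n m σ : ℝ) ^ 2 =
        ((setsFixed n m σ * setsFixed n m σ : ℕ) : ℝ) := by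
      intro σ; push_cast; ring
    rw [Finset.sum_congr rfl (fun σ _ => this σ), ← Nat.cast_sum, hsecond]
    push_cast; ring
  constructor
  · rw [E2, mul_div_assoc, div_self hfne, mul_one]
  · rw [E2, E1, mul_div_assoc, div_self hfne, mul_one, one_pow]
    ring
end
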